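/- arXiv:math/0609182 — 5 statements merged into one kernel-verified Lean document; each statement's English description precedes it below -/
import Mathlib

section
/- Every infinite-dimensional C*-algebra contains a positive element whose spectrum is infinite. -/
set_option linter.unusedSectionVars false
set_option maxHeartbeats 1600000

open Polynomial


section Basics
variable {B : Type*} [CStarAlgebra B]

private lemma star_aeval {h : B} (hh : IsSelfAdjoint h) (P : ℂ[X]) :
    star (aeval h P) = aeval h (P.map (starRingEnd ℂ)) := by
  induction P using Polynomial.induction_on' with
  | add p q hp hq => simp [hp, hq, star_add]
  | monomial n c =>
    simp only [aeval_monomial, Polynomial.map_monomial, star_mul, star_pow, hh.star_eq]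
    have : star ((algebraMap ℂ B) c) = algebraMap ℂ B ((starRingEnd ℂ) c) := by
      simp [Algebra.algebraMap_eq_smul_one, star_smul]
    rw [this, ← Algebra.commutes]

private lemma sa_eq_zero_of_spectrum_subset {h : B} [Nontrivial B] (hh : IsSelfAdjoint h)
    (hs : spectrum ℂ h ⊆ {0}) : h = 0 := by
  have h1 : spectrum ℂ h = {0} :=
    le_antisymm hs (Set.singleton_subset_iff.mpr (by
      obtain ⟨z, hz⟩ := spectrum.nonempty h
      have := hs hz
      simp only [Set.mem_singleton_iff] at this
      exact this ▸ hz))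
  have h2 : spectralRadius ℂ h = 0 := by
    simp [spectralRadius, h1]
  have h3 := hh.spectralRadius_eq_nnnorm
  rw [h2] at h3
  have : ‖h‖₊ = 0 := by exact_mod_cast h3.symm
  simpa using this

/-- Key vanishing lemma: a polynomial vanishing on the spectrum of a selfadjoint element
kills it. -/
private lemma aeval_eq_zero_of_vanish [Nontrivial B] {h : B} (hh : IsSelfAdjoint h)
    {P : ℂ[X]} (hP : ∀ z ∈ spectrum ℂ h, P.eval z = 0) : aeval h P = 0 := by
  set Q : ℂ[X] := P.map (starRingEnd ℂ) * P with hQ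
  have hQsa : IsSelfAdjoint (aeval h Q) := by
    rw [IsSelfAdjoint, star_aeval hh, hQ, Polynomial.map_mul, Polynomial.map_map]
    have : (starRingEnd ℂ).comp (starRingEnd ℂ) = RingHom.id ℂ := by
      ext z; simp
    rw [this, Polynomial.map_id, mul_comm]
  have hQv : spectrum ℂ (aeval h Q) ⊆ {0} := by
    rw [spectrum.map_polynomial_aeval_of_nonempty h Q (spectrum.nonempty h)]
    rintro - ⟨z, hz, rfl⟩
    simp [hQ, hP z hz]
  have hQ0 : aeval h Q = 0 := sa_eq_zero_of_spectrum_subset hQsa hQv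
  rw [hQ, map_mul, ← star_aeval hh] at hQ0
  exact (CStarRing.star_mul_self_eq_zero_iff _).mp hQ0

private lemma aeval_congr_of_eqOn [Nontrivial B] {h : B} (hh : IsSelfAdjoint h)
    {P Q : ℂ[X]} (hPQ : ∀ z ∈ spectrum ℂ h, P.eval z = Q.eval z) :
    aeval h P = aeval h Q := by
  have := aeval_eq_zero_of_vanish hh (P := P - Q) (by intro z hz; simp [hPQ z hz])
  rw [map_sub, sub_eq_zero] at this
  exact this

end Basics


section Proj
variable {B : Type*} [CStarAlgebra B] [Nontrivial B]


variable {h : B} (hh : IsSelfAdjoint h) (hfin : (spectrum ℂ h).Finite)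

private noncomputable def nds (hfin : (spectrum ℂ h).Finite) : Finset ℂ :=
  insert 0 hfin.toFinset

private lemma spec_subset_nds : spectrum ℂ h ⊆ (nds hfin : Set ℂ) := by
  intro z hz
  simp only [nds, Finset.coe_insert, Set.mem_insert_iff]
  exact Or.inr (by simpa using hfin.mem_toFinset.mpr hz)

private lemma mem_nds {z : ℂ} : z ∈ nds hfin ↔ z = 0 ∨ z ∈ spectrum ℂ h := by
  simp [nds, Set.Finite.mem_toFinset]

private noncomputable def sP (hfin : (spectrum ℂ h).Finite) (lam : ℂ) : ℂ[X] :=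
  Lagrange.interpolate (nds hfin) id (fun z => if z = lam then 1 else 0)

private lemma sP_eval {z lam : ℂ} (hz : z ∈ nds hfin) :
    (sP hfin lam).eval z = if z = lam then 1 else 0 := by
  have := Lagrange.eval_interpolate_at_node (r := fun z => if z = lam then 1 else 0)
    (Set.injOn_id _) hz
  simpa [sP] using this

private noncomputable def sProj (hfin : (spectrum ℂ h).Finite) (lam : ℂ) : B :=
  aeval h (sP hfin lam)

include hh

private lemma sP_eval_spec {z lam : ℂ} (hz : z ∈ spectrum ℂ h) :
    (sP hfin lam).eval z = if z = lam then 1 else 0 :=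
  sP_eval hfin (spec_subset_nds hfin hz)

private lemma sProj_star (lam : ℂ) : star (sProj hfin lam) = sProj hfin lam := by
  rw [sProj, star_aeval hh]
  apply aeval_congr_of_eqOn hh
  intro z hz
  have hzc : (starRingEnd ℂ) z = z := by
    rw [hh.mem_spectrum_eq_re hz]; exact Complex.conj_ofReal _
  calc ((sP hfin lam).map (starRingEnd ℂ)).eval z
      = (sP hfin lam).eval₂ (starRingEnd ℂ) ((starRingEnd ℂ) z) := by rw [eval_map, hzc]
    _ = (starRingEnd ℂ) ((sP hfin lam).eval z) := eval₂_hom _ _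
    _ = (sP hfin lam).eval z := by
        rw [sP_eval_spec hh hfin hz]
        split <;> simp

private lemma sProj_sa (lam : ℂ) : IsSelfAdjoint (sProj hfin lam) := sProj_star hh hfin lam

private lemma sProj_mul (lam mu : ℂ) :
    sProj hfin lam * sProj hfin mu = if lam = mu then sProj hfin lam else 0 := by
  rw [sProj, sProj, ← map_mul]
  split
  · next heq =>
    subst heq
    apply aeval_congr_of_eqOn hh
    intro z hz
    rw [eval_mul, sP_eval_spec hh hfin hz]
    split <;> simp
  · next hne =>
    rw [show (0 : B) = aeval h (0 : ℂ[X]) by simp]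
    apply aeval_congr_of_eqOn hh
    intro z hz
    rw [eval_mul, sP_eval_spec hh hfin hz, sP_eval_spec hh hfin hz]
    split
    · next hzl => subst hzl; simp [hne]
    · simp

private lemma sProj_idem (lam : ℂ) :
    sProj hfin lam * sProj hfin lam = sProj hfin lam := by
  simpa using sProj_mul hh hfin lam lam

private lemma sProj_ne_zero {lam : ℂ} (hl : lam ∈ spectrum ℂ h) : sProj hfin lam ≠ 0 := by
  intro h0
  have hmap := spectrum.map_polynomial_aeval_of_nonempty h (sP hfin lam) (spectrum.nonempty h)
  rw [← sProj, h0] at hmap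
  have h1 : (1 : ℂ) ∈ spectrum ℂ (0 : B) := by
    rw [hmap]
    exact ⟨lam, hl, by simp [sP_eval_spec hh hfin hl]⟩
  rw [spectrum.zero_eq] at h1
  simp at h1

private lemma sum_sProj : (∑ lam ∈ nds hfin, lam • sProj hfin lam) = h := by
  have : ∀ lam ∈ nds hfin, lam • sProj hfin lam = aeval h (Polynomial.C lam * sP hfin lam) := by
    intro lam _
    rw [map_mul, aeval_C, sProj, Algebra.smul_def]
  rw [Finset.sum_congr rfl this, ← map_sum]
  conv_rhs => rw [show h = aeval h (X : ℂ[X]) by simp]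
  apply aeval_congr_of_eqOn hh
  intro z hz
  rw [eval_finset_sum]
  have hzn := spec_subset_nds hfin hz
  rw [Finset.sum_eq_single z ?_ ?_]
  · simp [sP_eval_spec hh hfin hz]
  · intro b _ hbz
    rw [eval_mul, eval_C, sP_eval_spec hh hfin hz, if_neg (fun hzb => hbz (by rw [hzb]))]
    simp
  · intro habs
    exact absurd hzn habs

/-- if `lam ≠ 0` then the spectral projection absorbs anything that `h` absorbs -/
private lemma sProj_corner {lam : ℂ} (hl : lam ≠ 0) {q : B} (hq1 : h * q = h) (hq2 : q * h = h) :
    sProj hfin lam * q = sProj hfin lam ∧ q * sProj hfin lam = sProj hfin lam := by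
  set P := sP hfin lam with hP
  have h0 : P.coeff 0 = 0 := by
    rw [Polynomial.coeff_zero_eq_eval_zero, hP, sP_eval hfin (by simp [nds])]
    simp [Ne.symm hl]
  have hXP : P = X * P.divX := by
    conv_lhs => rw [← X_mul_divX_add P, h0]
    simp
  have hcomm : Commute h (aeval h P.divX) := by
    simpa using (Commute.all (X : ℂ[X]) P.divX).map (aeval h : ℂ[X] →ₐ[ℂ] B)
  have he : sProj hfin lam = h * aeval h P.divX := by
    rw [sProj, ← hP]
    conv_lhs => rw [hXP]
    rw [map_mul, aeval_X]
  constructor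
  · rw [he, hcomm.eq, mul_assoc, hq1, ← hcomm.eq]
  · rw [he, ← mul_assoc, hq2]

end Proj


section Orth
variable {B : Type*} [CStarAlgebra B]

private lemma proj_norm_le_one {p : B} (hsa : IsSelfAdjoint p) (hid : p * p = p) : ‖p‖ ≤ 1 := by
  rcases eq_or_ne p 0 with rfl | hp
  · simp
  · have h1 : ‖p‖ * ‖p‖ = ‖p‖ := by
      conv_rhs => rw [← hid]
      conv_lhs => rw [← CStarRing.norm_star_mul_self (x := p), hsa.star_eq]
    have h2 : ‖p‖ ≠ 0 := norm_ne_zero_iff.mpr hp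
    nlinarith [norm_nonneg p]

/-- In a C*-algebra where all selfadjoint elements have finite spectrum,
any pairwise-orthogonal family of nonzero selfadjoint idempotents is finite. -/
private lemma orth_family_finite
    (hspec : ∀ b : B, IsSelfAdjoint b → (spectrum ℂ b).Finite)
    (S : Set B) (hproj : ∀ p ∈ S, IsSelfAdjoint p ∧ p * p = p ∧ p ≠ 0)
    (horth : S.Pairwise (fun p q => p * q = 0)) : S.Finite := by
  by_contra hinf
  replace hinf : S.Infinite := fun hfin => hinf hfin
  set f := hinf.natEmbedding with hf
  set p : ℕ → B := fun n => (f n : B) with hp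
  have hmem : ∀ n, p n ∈ S := fun n => (f n).2
  have hpne : ∀ n m, n ≠ m → p n ≠ p m := by
    intro n m hnm heq
    exact hnm (f.injective (Subtype.ext heq))
  set c : ℕ → ℂ := fun n => (((2 : ℝ)⁻¹) ^ (n + 1) : ℝ) with hc
  have hsummable : Summable (fun n => c n • p n) := by
    apply Summable.of_norm
    refine Summable.of_nonneg_of_le (fun n => norm_nonneg _) (fun n => ?_)
      ((summable_geometric_of_lt_one (by norm_num : (0:ℝ) ≤ 2⁻¹) (by norm_num)).comp_injective
        (add_left_injective 1))
    rw [norm_smul]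
    have h1 : ‖c n‖ = (2⁻¹ : ℝ) ^ (n+1) := by
      rw [hc]; rw [Complex.norm_real]
      simp [abs_of_nonneg]
    rw [h1]
    have := proj_norm_le_one (hproj _ (hmem n)).1 (hproj _ (hmem n)).2.1
    show (2⁻¹:ℝ) ^ (n+1) * ‖p n‖ ≤ (fun k => (2⁻¹:ℝ) ^ (k+1)) n
    have h2 : (0:ℝ) ≤ 2⁻¹ ^ (n+1) := pow_nonneg (by norm_num) (n+1)
    nlinarith [norm_nonneg (p n)]
  set a : B := ∑' n, c n • p n with ha
  have hasa : IsSelfAdjoint a := by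
    rw [IsSelfAdjoint, ha, tsum_star]
    congr 1
    funext n
    rw [star_smul, (hproj _ (hmem n)).1.star_eq]
    congr 1
    rw [hc]
    exact Complex.conj_ofReal _
  have hmul : ∀ m, a * p m = c m • p m := by
    intro m
    rw [ha, ← Summable.tsum_mul_right _ hsummable]
    rw [tsum_eq_single m]
    · rw [smul_mul_assoc, (hproj _ (hmem m)).2.1]
    · intro n hnm
      rw [smul_mul_assoc, horth (hmem n) (hmem m) (hpne n m hnm), smul_zero]
  have hspec_mem : ∀ m, c m ∈ spectrum ℂ a := by
    intro m
    rw [spectrum.mem_iff]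
    intro hu
    have h0 : (algebraMap ℂ B (c m) - a) * p m = 0 := by
      rw [sub_mul, hmul, Algebra.algebraMap_eq_smul_one, smul_mul_assoc, one_mul, sub_self]
    obtain ⟨u, hu⟩ := hu
    have : p m = 0 := by
      calc p m = (↑u⁻¹ * ↑u) * p m := by rw [u.inv_mul, one_mul]
        _ = ↑u⁻¹ * ((algebraMap ℂ B (c m) - a) * p m) := by rw [mul_assoc, hu]
        _ = 0 := by rw [h0, mul_zero]
    exact (hproj _ (hmem m)).2.2 this
  have hinj : Function.Injective c := by
    intro n m hnm
    have : ((2 : ℝ)⁻¹) ^ (n + 1) = ((2 : ℝ)⁻¹) ^ (m + 1) := by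
      exact_mod_cast congrArg Complex.re hnm
    have h2 := (pow_right_strictAnti₀ (by norm_num : (0:ℝ) < 2⁻¹) (by norm_num)).injective this
    exact Nat.add_right_cancel h2
  have : (spectrum ℂ a).Infinite :=
    Set.infinite_of_injective_forall_mem hinj hspec_mem
  exact this (hspec a hasa)

end Orth

section Min
variable {B : Type*} [CStarAlgebra B]

/-- a minimal projection -/
private def IsMinProj (m : B) : Prop :=
  IsSelfAdjoint m ∧ m * m = m ∧ m ≠ 0 ∧ ∀ x : B, ∃ c : ℂ, m * x * m = c • m

variable (hspec : ∀ b : B, IsSelfAdjoint b → (spectrum ℂ b).Finite)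

include hspec in
/-- A non-minimal nonzero projection has a proper nonzero subprojection. -/
private lemma exists_proper_subproj {q : B} (hqsa : IsSelfAdjoint q) (hqid : q * q = q)
    (hq0 : q ≠ 0) (hqnm : ¬ ∀ x : B, ∃ c : ℂ, q * x * q = c • q) :
    ∃ r : B, IsSelfAdjoint r ∧ r * r = r ∧ r * q = r ∧ q * r = r ∧ r ≠ 0 ∧ r ≠ q := by
  haveI hnt : Nontrivial B := nontrivial_of_ne q 0 hq0
  push_neg at hqnm
  obtain ⟨x, hx⟩ := hqnm
  have hstaru : star (q * x * q) = q * star x * q := by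
    rw [star_mul, star_mul, hqsa.star_eq, mul_assoc]
  obtain ⟨h, hhsa, hhq, hqh, hnc⟩ : ∃ h : B, IsSelfAdjoint h ∧ h * q = h ∧ q * h = h ∧
      ∀ c : ℂ, h ≠ c • q := by
    by_cases H : ∀ c : ℂ, q * x * q + star (q * x * q) ≠ c • q
    · refine ⟨q * x * q + star (q * x * q), ?_, ?_, ?_, H⟩
      · rw [IsSelfAdjoint, star_add, star_star, add_comm]
      · rw [hstaru]; simp only [add_mul, mul_assoc, hqid]
      · rw [hstaru]; simp only [mul_add, ← mul_assoc, hqid]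
    · push_neg at H
      obtain ⟨c₀, hc₀⟩ := H
      refine ⟨Complex.I • (q * x * q - star (q * x * q)), ?_, ?_, ?_, ?_⟩
      · rw [IsSelfAdjoint, star_smul, star_sub, star_star]
        simp only [Complex.star_def, Complex.conj_I, neg_smul, smul_sub, neg_sub]
        abel
      · rw [hstaru]; rw [smul_mul_assoc]; congr 1
        simp only [sub_mul, mul_assoc, hqid]
      · rw [hstaru]; rw [mul_smul_comm]; congr 1
        simp only [mul_sub, ← mul_assoc, hqid]
      · intro c hcon
        apply hx ((c₀ + -Complex.I * c) * 2⁻¹)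
        have h1 : q * x * q - star (q * x * q) = (-Complex.I * c) • q := by
          have := congrArg (fun y => (-Complex.I) • y) hcon
          simpa [smul_smul, Complex.I_mul_I] using this
        have h2 : (2 : ℂ) • (q * x * q) = ((c₀ + -Complex.I * c)) • q := by
          have : (2 : ℂ) • (q * x * q)
              = (q * x * q + star (q * x * q)) + (q * x * q - star (q * x * q)) := by
            rw [two_smul]; abel
          rw [this, hc₀, h1, ← add_smul]
        have := congrArg (fun y => (2⁻¹ : ℂ) • y) h2
        simpa [smul_smul, mul_comm] using this
  have hfin := hspec h hhsa
  have hex : ∃ lam ∈ spectrum ℂ h, lam ≠ 0 := by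
    by_contra hcz
    push_neg at hcz
    have h0 : h = 0 := sa_eq_zero_of_spectrum_subset hhsa (fun z hz => hcz z hz)
    exact hnc 0 (by rw [h0, zero_smul])
  obtain ⟨lam, hlam, hlam0⟩ := hex
  by_cases hall : ∀ mu ∈ spectrum ℂ h, mu ≠ 0 → sProj hfin mu = q
  · exfalso
    apply hnc lam
    rw [← sum_sProj hhsa hfin, Finset.sum_eq_single lam]
    · rw [hall lam hlam hlam0]
    · intro b hb hbne
      rcases (mem_nds hfin).mp hb with rfl | hbs
      · simp
      · by_cases hb0 : b = 0
        · simp [hb0]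
        · exfalso
          have h1 := hall b hbs hb0
          have h2 := hall lam hlam hlam0
          have h3 := sProj_mul hhsa hfin b lam
          rw [if_neg hbne, h1, h2, hqid] at h3
          exact hq0 h3
    · intro hnot; exact absurd ((mem_nds hfin).mpr (Or.inr hlam)) hnot
  · push_neg at hall
    obtain ⟨mu, hmu, hmu0, hne⟩ := hall
    have hcor := sProj_corner hhsa hfin hmu0 hhq hqh
    exact ⟨sProj hfin mu, sProj_sa hhsa hfin mu, by simpa using sProj_mul hhsa hfin mu mu,
      hcor.1, hcor.2, sProj_ne_zero hhsa hfin hmu, hne⟩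

end Min

section Min2
variable {B : Type*} [CStarAlgebra B]


variable (hspec : ∀ b : B, IsSelfAdjoint b → (spectrum ℂ b).Finite)

include hspec in
private lemma exists_min_below {q : B} (hqsa : IsSelfAdjoint q) (hqid : q * q = q)
    (hq0 : q ≠ 0) : ∃ m : B, IsMinProj m ∧ m * q = m ∧ q * m = m := by
  by_contra hc
  push_neg at hc
  let T := {r : B // (IsSelfAdjoint r ∧ r * r = r ∧ r ≠ 0) ∧ r * q = r ∧ q * r = r}
  have step : ∀ r : T, ∃ r' : B,
      IsSelfAdjoint r' ∧ r' * r' = r' ∧ r' * r.1 = r' ∧ r.1 * r' = r' ∧ r' ≠ 0 ∧ r' ≠ r.1 := by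
    rintro ⟨r, ⟨hsa, hid, h0⟩, hrq, hqr⟩
    apply exists_proper_subproj hspec hsa hid h0
    intro hmin
    exact hc r ⟨hsa, hid, h0, hmin⟩ hrq hqr
  choose f hf1 hf2 hf3 hf4 hf5 hf6 using step
  have hfq : ∀ r : T, f r * q = f r ∧ q * f r = f r := by
    intro r
    constructor
    · rw [← hf3 r, mul_assoc, r.2.2.1, hf3 r]
    · rw [← hf4 r, ← mul_assoc, r.2.2.2, hf4 r]
  let g : T → T := fun r => ⟨f r, ⟨hf1 r, hf2 r, hf5 r⟩, (hfq r).1, (hfq r).2⟩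
  let u : ℕ → T := fun n => g^[n] ⟨q, ⟨hqsa, hqid, hq0⟩, hqid, hqid⟩
  have usucc : ∀ n, u (n + 1) = g (u n) := by
    intro n
    simp only [u, Function.iterate_succ_apply']
  have hle : ∀ n m, n ≤ m → (u m).1 * (u n).1 = (u m).1 ∧ (u n).1 * (u m).1 = (u m).1 := by
    intro n m hnm
    induction m, hnm using Nat.le_induction with
    | base => exact ⟨(u n).2.1.2.1, (u n).2.1.2.1⟩
    | succ m hnm ih =>
      have h1 : (u (m+1)).1 = f (u m) := by rw [usucc]
      constructor
      · rw [h1, ← hf3 (u m), mul_assoc, ih.1, hf3 (u m)]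
      · rw [h1, ← hf4 (u m), ← mul_assoc, ih.2, hf4 (u m)]
  let d : ℕ → B := fun n => (u n).1 - (u (n + 1)).1
  have dsa : ∀ n, IsSelfAdjoint (d n) := fun n =>
    ((u n).2.1.1).sub ((u (n+1)).2.1.1)
  have did : ∀ n, d n * d n = d n := by
    intro n
    have hab := (hle n (n+1) (Nat.le_succ n)).2
    have hba := (hle n (n+1) (Nat.le_succ n)).1
    show ((u n).1 - (u (n+1)).1) * ((u n).1 - (u (n+1)).1) = (u n).1 - (u (n+1)).1
    rw [sub_mul, mul_sub, mul_sub, (u n).2.1.2.1, hab, hba, (u (n+1)).2.1.2.1]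
    abel
  have dne : ∀ n, d n ≠ 0 := by
    intro n h0
    apply hf6 (u n)
    have h1 : (u (n+1)).1 = f (u n) := by rw [usucc]
    rw [← h1]
    exact (sub_eq_zero.mp h0).symm
  have dorth : ∀ n m, n < m → d n * d m = 0 := by
    intro n m hnm
    show ((u n).1 - (u (n+1)).1) * ((u m).1 - (u (m+1)).1) = 0
    have h1 := (hle n m hnm.le).2
    have h2 := (hle n (m+1) (hnm.le.trans (Nat.le_succ m))).2
    have h3 := (hle (n+1) m hnm).2
    have h4 := (hle (n+1) (m+1) (Nat.succ_le_succ hnm.le)).2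
    rw [sub_mul, mul_sub, mul_sub, h1, h2, h3, h4]
    abel
  have dorth' : ∀ n m, n ≠ m → d n * d m = 0 := by
    intro n m hnm
    rcases hnm.lt_or_gt with h | h
    · exact dorth n m h
    · have := dorth m n h
      calc d n * d m = star (d m * d n) := by
            rw [star_mul, (dsa n).star_eq, (dsa m).star_eq]
        _ = 0 := by rw [this, star_zero]
  have dinj : Function.Injective d := by
    intro n m hnm
    by_contra hne
    have h1 := dorth' n m hne
    rw [hnm, did m] at h1
    exact dne m h1
  have hfin := orth_family_finite hspec (Set.range d) ?_ ?_
  · exact (Set.infinite_range_of_injective dinj) hfin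
  · rintro p ⟨n, rfl⟩
    exact ⟨dsa n, did n, dne n⟩
  · rintro p ⟨n, rfl⟩ r ⟨m, rfl⟩ hne
    exact dorth' n m (fun h => hne (by rw [h]))

end Min2

section U
variable {B : Type*} [CStarAlgebra B]



private lemma corner_one_dim {p q : B} (hp : IsMinProj p) (hq : IsMinProj q) :
    ∃ v : B, ∀ x : B, ∃ c : ℂ, p * x * q = c • v := by
  obtain ⟨hpsa, hpid, hp0, hpmin⟩ := hp
  obtain ⟨hqsa, hqid, hq0, hqmin⟩ := hq
  by_cases hall : ∀ x : B, p * x * q = 0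
  · exact ⟨0, fun x => ⟨0, by rw [hall x, zero_smul]⟩⟩
  · push_neg at hall
    obtain ⟨x₀, hx₀⟩ := hall
    set w : B := p * x₀ * q with hw
    have hstarw : star w = q * star x₀ * p := by
      rw [hw, star_mul, star_mul, hpsa.star_eq, hqsa.star_eq, mul_assoc]
    have key : ∀ x : B, star w * (p * x * q) = q * (star x₀ * (p * x)) * q := by
      intro x
      rw [hstarw]
      simp only [mul_assoc]
      rw [← mul_assoc p p, hpid]
    obtain ⟨al, hal⟩ := hqmin (star x₀ * (p * x₀))
    have hwal : star w * w = al • q := by rw [hw, key x₀, hal]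
    have hal0 : al ≠ 0 := by
      intro h0
      rw [h0, zero_smul] at hwal
      exact (CStarRing.star_mul_self_ne_zero_iff w).mpr (by rw [hw]; exact hx₀) hwal
    obtain ⟨be, hbe⟩ := hpmin (x₀ * (q * star x₀))
    have hwbe : w * star w = be • p := by
      rw [hw, hstarw, ← hbe]
      simp only [mul_assoc]
      rw [← mul_assoc q q, hqid]
    have hbe0 : be ≠ 0 := by
      intro h0
      rw [h0, zero_smul] at hwbe
      exact (CStarRing.mul_star_self_ne_zero_iff w).mpr (by rw [hw]; exact hx₀) hwbe
    refine ⟨w, fun x => ?_⟩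
    obtain ⟨c, hc⟩ := hqmin (star x₀ * (p * x))
    have hcy : star w * (p * x * q) = c • q := by rw [key x, hc]
    set z : B := p * x * q - (c / al) • w with hz
    have hz1 : star w * z = 0 := by
      rw [hz, mul_sub, hcy, mul_smul_comm, hwal, smul_smul, div_mul_cancel₀ c hal0, sub_self]
    have hpy : ∀ y : B, p * (p * y * q) = p * y * q := by
      intro y
      rw [← mul_assoc, ← mul_assoc, hpid]
    have hpz : p * z = z := by
      rw [hz, mul_sub, hpy, mul_smul_comm]
      congr 2
      rw [hw, hpy]
    have hzz : be • z = 0 := by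
      calc be • z = (be • p) * z := by rw [smul_mul_assoc, hpz]
        _ = w * (star w * z) := by rw [← hwbe, mul_assoc]
        _ = 0 := by rw [hz1, mul_zero]
    have hz0 : z = 0 := by
      rcases smul_eq_zero.mp hzz with h | h
      · exact absurd h hbe0
      · exact h
    exact ⟨c / al, (sub_eq_zero.mp (hz ▸ hz0))⟩

private theorem findim_of_fin_spectrum
    (hspec : ∀ b : B, IsSelfAdjoint b → (spectrum ℂ b).Finite) :
    FiniteDimensional ℂ B := by
  rcases subsingleton_or_nontrivial B with hsub | hnt
  · infer_instance
  · set Good : Set (Set B) := {S | (∀ p ∈ S, IsMinProj p) ∧ S.Pairwise (fun p q => p * q = 0)}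
      with hGood
    obtain ⟨M, hM⟩ := zorn_subset Good (by
      intro c hcG hchain
      refine ⟨⋃₀ c, ⟨?_, ?_⟩, fun s hs => Set.subset_sUnion_of_mem hs⟩
      · rintro r ⟨s, hs, hrs⟩
        exact (hcG hs).1 r hrs
      · rintro r ⟨s, hs, hrs⟩ r' ⟨t, ht, hrt⟩ hne
        rcases hchain.total hs ht with hst | hst
        · exact (hcG ht).2 (hst hrs) hrt hne
        · exact (hcG hs).2 hrs (hst hrt) hne)
    have hMG : M ∈ Good := hM.prop
    have hMfin : M.Finite := orth_family_finite hspec M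
      (fun r hr => ⟨(hMG.1 r hr).1, (hMG.1 r hr).2.1, (hMG.1 r hr).2.2.1⟩) hMG.2
    set F : Finset B := hMfin.toFinset with hF
    have hFM : ∀ r : B, r ∈ F ↔ r ∈ M := fun r => hMfin.mem_toFinset
    set s : B := ∑ r ∈ F, r with hs
    have horth : ∀ r ∈ F, ∀ r' ∈ F, r ≠ r' → r * r' = 0 := by
      intro r hr r' hr' hne
      exact hMG.2 ((hFM r).mp hr) ((hFM r').mp hr') hne
    have hsp : ∀ r ∈ F, s * r = r ∧ r * s = r := by
      intro r hr
      constructor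
      · rw [hs, Finset.sum_mul, Finset.sum_eq_single r
          (fun b hb hbr => horth b hb r hr hbr)
          (fun habs => absurd hr habs)]
        exact (hMG.1 r ((hFM r).mp hr)).2.1
      · rw [hs, Finset.mul_sum, Finset.sum_eq_single r
          (fun b hb hbr => horth r hr b hb (Ne.symm hbr))
          (fun habs => absurd hr habs)]
        exact (hMG.1 r ((hFM r).mp hr)).2.1
    have hssa : IsSelfAdjoint s := by
      rw [IsSelfAdjoint, hs, star_sum]
      exact Finset.sum_congr rfl (fun r hr => (hMG.1 r ((hFM r).mp hr)).1.star_eq)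
    have hsid : s * s = s := by
      conv_lhs => rw [hs, Finset.sum_mul]
      rw [Finset.sum_congr rfl (fun r hr => (hsp r hr).2)]
    have hone : s = 1 := by
      by_contra hs1
      set t : B := 1 - s with ht
      have htsa : IsSelfAdjoint t := by
        rw [IsSelfAdjoint, ht, star_sub, star_one, hssa.star_eq]
      have htid : t * t = t := by
        rw [ht]
        simp only [sub_mul, mul_sub, one_mul, mul_one, hsid]
        abel
      have ht0 : t ≠ 0 := by
        rw [ht, sub_ne_zero]
        exact fun h => hs1 h.symm
      obtain ⟨m, hm, hmt, htm⟩ := exists_min_below hspec htsa htid ht0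
      have hms : m * s = 0 := by
        have : m * (1 - s) = m := hmt
        rw [mul_sub, mul_one] at this
        linear_combination (norm := abel) -this
      have hsm : s * m = 0 := by
        have : (1 - s) * m = m := htm
        rw [sub_mul, one_mul] at this
        linear_combination (norm := abel) -this
      have hmM : ∀ r ∈ M, m * r = 0 ∧ r * m = 0 := by
        intro r hr
        have h1 := (hsp r ((hFM r).mpr hr)).1
        have h2 := (hsp r ((hFM r).mpr hr)).2
        constructor
        · rw [← h1, ← mul_assoc, hms, zero_mul]
        · rw [← h2, mul_assoc, hsm, mul_zero]
      have hmnotM : m ∉ M := by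
        intro hmem
        have := (hmM m hmem).1
        rw [hm.2.1] at this
        exact hm.2.2.1 this
      have hinsG : insert m M ∈ Good := by
        constructor
        · rintro r (rfl | hr)
          · exact hm
          · exact hMG.1 r hr
        · intro r hr r' hr' hne
          rcases hr with rfl | hr <;> rcases hr' with rfl | hr'
          · exact absurd rfl hne
          · exact (hmM r' hr').1
          · exact (hmM r hr).2
          · exact hMG.2 hr hr' hne
      have := hM.2 hinsG (Set.subset_insert m M)
      exact hmnotM (this (Set.mem_insert m M))
    -- spanning
    have hv : ∀ r r' : B, ∃ v : B,
        IsMinProj r → IsMinProj r' → ∀ x : B, ∃ c : ℂ, r * x * r' = c • v := by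
      intro r r'
      by_cases hr : IsMinProj r
      · by_cases hr' : IsMinProj r'
        · obtain ⟨v, hv⟩ := corner_one_dim hr hr'
          exact ⟨v, fun _ _ => hv⟩
        · exact ⟨0, fun _ h => absurd h hr'⟩
      · exact ⟨0, fun h => absurd h hr⟩
    choose v hvspec using hv
    set V : Set B := Set.image2 v M M with hV
    have hVfin : V.Finite := Set.Finite.image2 v hMfin hMfin
    have hkey : ∀ x : B, x ∈ Submodule.span ℂ V := by
      intro x
      have hx : x = ∑ r ∈ F, ∑ r' ∈ F, r * x * r' := by
        calc x = s * x * s := by rw [hone, one_mul, mul_one]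
          _ = ∑ r ∈ F, (r * x) * s := by rw [hs, Finset.sum_mul, Finset.sum_mul]
          _ = ∑ r ∈ F, ∑ r' ∈ F, r * x * r' := by
              refine Finset.sum_congr rfl (fun r hr => ?_)
              rw [hs, Finset.mul_sum]
      rw [hx]
      apply Submodule.sum_mem
      intro r hr
      apply Submodule.sum_mem
      intro r' hr'
      obtain ⟨c, hc⟩ := hvspec r r' (hMG.1 r ((hFM r).mp hr)) (hMG.1 r' ((hFM r').mp hr')) x
      rw [hc]
      exact Submodule.smul_mem _ c (Submodule.subset_span
        (Set.mem_image2_of_mem ((hFM r).mp hr) ((hFM r').mp hr')))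
    have hspan : Submodule.span ℂ V = ⊤ := eq_top_iff.mpr (fun x _ => hkey x)
    have h1 : FiniteDimensional ℂ (Submodule.span ℂ V) := FiniteDimensional.span_of_finite ℂ hVfin
    have h2 : FiniteDimensional ℂ (⊤ : Submodule ℂ B) := hspan ▸ h1
    exact Submodule.topEquiv.finiteDimensional

end U



/-- Every infinite-dimensional C*-algebra contains a positive element whose
spectrum (quasispectrum, i.e. the spectrum in the unitization) is infinite. -/
theorem stmt_0 {A : Type*} [NonUnitalCStarAlgebra A] [PartialOrder A] [StarOrderedRing A]
    (h : ¬ FiniteDimensional ℂ A) :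
    ∃ a : A, 0 ≤ a ∧ (quasispectrum ℂ a).Infinite := by
  by_contra hcon
  push_neg at hcon
  have hpos : ∀ a : A, 0 ≤ a → (quasispectrum ℂ a).Finite := by
    intro a ha
    have := hcon a ha
    exact this
  apply h
  have hspec : ∀ b : Unitization ℂ A, IsSelfAdjoint b → (spectrum ℂ b).Finite := by
    intro b hb
    set h1 : A := b.snd with hh1
    have hh1sa : IsSelfAdjoint h1 := by
      rw [hh1, IsSelfAdjoint, ← Unitization.snd_star, hb.star_eq]
    have hsq : (0 : A) ≤ h1 * h1 := by
      have := star_mul_self_nonneg h1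
      rwa [hh1sa.star_eq] at this
    have hfin2 : (quasispectrum ℂ (h1 * h1)).Finite := hpos _ hsq
    have hfin1 : (quasispectrum ℂ h1).Finite := by
      have hsub : quasispectrum ℂ h1 ⊆ {z : ℂ | z ^ 2 ∈ quasispectrum ℂ (h1 * h1)} := by
        intro z hz
        rw [Unitization.quasispectrum_eq_spectrum_inr ℂ] at hz ⊢
        have hmap := spectrum.subset_polynomial_aeval (𝕜 := ℂ)
          ((h1 : Unitization ℂ A)) (Polynomial.X ^ 2)
        have hmem : z ^ 2 ∈ spectrum ℂ (Polynomial.aeval ((h1 : Unitization ℂ A))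
            (Polynomial.X ^ 2 : Polynomial ℂ)) := hmap ⟨z, hz, by simp⟩
        simpa [Unitization.inr_mul, sq] using hmem
      apply Set.Finite.subset ?_ hsub
      have : {z : ℂ | z ^ 2 ∈ quasispectrum ℂ (h1 * h1)}
          = ⋃ w ∈ quasispectrum ℂ (h1 * h1), {z : ℂ | z ^ 2 = w} := by
        ext z; simp
      rw [this]
      apply Set.Finite.biUnion hfin2
      intro w _
      have hpne : (Polynomial.X ^ 2 - Polynomial.C w : Polynomial ℂ) ≠ 0 :=
        Polynomial.X_pow_sub_C_ne_zero (by norm_num) w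
      apply Set.Finite.subset (Polynomial.finite_setOf_isRoot hpne)
      intro z hz
      simp only [Set.mem_setOf_eq] at hz
      simp [Polynomial.IsRoot, hz]
    -- translate
    have hsub2 : spectrum ℂ b ⊆ (fun z => z + b.fst) '' (quasispectrum ℂ h1) := by
      intro z hz
      refine ⟨z - b.fst, ?_, by ring⟩
      rw [Unitization.quasispectrum_eq_spectrum_inr ℂ]
      rw [spectrum.mem_iff] at hz ⊢
      intro hu
      apply hz
      have : algebraMap ℂ (Unitization ℂ A) (z - b.fst) - (h1 : Unitization ℂ A)
          = algebraMap ℂ (Unitization ℂ A) z - b := by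
        rw [map_sub]
        have hb' : b = Unitization.inl b.fst + (b.snd : Unitization ℂ A) :=
          (Unitization.inl_fst_add_inr_snd_eq b).symm
        rw [show algebraMap ℂ (Unitization ℂ A) b.fst = Unitization.inl b.fst from by
          rw [Unitization.algebraMap_eq_inl]]
        rw [hh1]
        conv_rhs => rw [hb']
        abel
      rwa [this] at hu
    exact Set.Finite.subset (hfin1.image _) hsub2
  haveI hBfd : FiniteDimensional ℂ (Unitization ℂ A) := findim_of_fin_spectrum hspec
  exact Module.Finite.of_injective (Unitization.inrHom ℂ ℂ A) Unitization.inr_injective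
end

section
/- Let A be a C*-algebra and a, b positive elements with ‖a − b‖ < ε. Then (a − ε)₊ is Cuntz subequivalent to b; that is, there exists a sequence (vₙ) in A with ‖vₙ b vₙ* − (a − ε)₊‖ → 0. -/
open Filter Topology

/-- Cuntz subequivalence: `a ≾ b` iff there is a sequence `(vₙ)` in `A` with
`vₙ b vₙ* → a` in norm. -/
def CuntzSubequiv {A : Type*} [NonUnitalCStarAlgebra A] (a b : A) : Prop :=
  ∃ v : ℕ → A, Tendsto (fun n => v n * b * star (v n)) atTop (nhds a)

section Aux

variable {A : Type*} [CStarAlgebra A] [PartialOrder A] [StarOrderedRing A]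

lemma cfc_conj_cfc (g k : ℝ → ℝ) (x : A) (hgc : Continuous g) (hkc : Continuous k) :
    cfc g x * cfc k x * cfc g x = cfc (fun t => g t * k t * g t) x := by
  rw [cfc_mul (fun t => g t * k t) g x ((hgc.mul hkc).continuousOn) hgc.continuousOn,
    cfc_mul g k x hgc.continuousOn hkc.continuousOn]

lemma cfc_conj_self (g : ℝ → ℝ) (x : A) (hx : IsSelfAdjoint x) (hgc : Continuous g) :
    cfc g x * x * cfc g x = cfc (fun t => g t * t * g t) x := by
  nth_rw 2 [← cfc_id' ℝ x hx]
  exact cfc_conj_cfc g (fun t => t) x hgc continuous_id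

lemma cfc_conj_sq (g : ℝ → ℝ) (x : A) (hx : IsSelfAdjoint x) (hgc : Continuous g) :
    cfc g x * (x * x) * cfc g x = cfc (fun t => g t * (t * t) * g t) x := by
  nth_rw 2 3 [← cfc_id' ℝ x hx]
  rw [show cfc (fun t : ℝ => t) x * cfc (fun t : ℝ => t) x = cfc (fun t : ℝ => t * t) x from
    (cfc_mul (fun t : ℝ => t) (fun t : ℝ => t) x continuous_id.continuousOn
      continuous_id.continuousOn).symm]
  exact cfc_conj_cfc g (fun t => t * t) x hgc (continuous_id.mul continuous_id)

lemma cfc_sub_self (g : ℝ → ℝ) (x : A) (hx : IsSelfAdjoint x) (hgc : Continuous g) :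
    cfc g x - x = cfc (fun t => g t - t) x := by
  nth_rw 2 [← cfc_id' ℝ x hx]
  exact (cfc_sub g (fun t => t) x hgc.continuousOn continuous_id.continuousOn).symm

/-- If `e * e ≤ c` (with `e, c ≥ 0`), then `e * e` is approximated within `δ` by a
conjugate of `c`. -/
lemma cuntz_aux1 (e c : A) (he : 0 ≤ e) (hc : 0 ≤ c) (hle : e * e ≤ c)
    (δ : ℝ) (hδ : 0 < δ) :
    ∃ r : A, ‖(e * r) * c * star (e * r) - e * e‖ ≤ δ := by
  have hce : IsSelfAdjoint e := IsSelfAdjoint.of_nonneg he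
  have hcc : IsSelfAdjoint c := IsSelfAdjoint.of_nonneg hc
  have hσ : ∀ x ∈ spectrum ℝ c, 0 ≤ x := fun x hx => spectrum_nonneg_of_nonneg hc hx
  have hpos : ∀ t : ℝ, 0 < max t 0 + δ := fun t =>
    add_pos_of_nonneg_of_pos (le_max_right t 0) hδ
  set w : ℝ → ℝ := fun t => (Real.sqrt (max t 0 + δ))⁻¹ with hw_def
  have hw : Continuous w := by
    apply Continuous.inv₀
    · exact Real.continuous_sqrt.comp (by fun_prop)
    · exact fun t => ne_of_gt (Real.sqrt_pos.mpr (hpos t))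
  set p : ℝ → ℝ := fun t => max t 0 / (max t 0 + δ) with hp_def
  have hp : Continuous p := by
    apply Continuous.div (by fun_prop) (by fun_prop)
    exact fun t => ne_of_gt (hpos t)
  have hp_le_one : ∀ t, p t ≤ 1 := fun t =>
    (div_le_one (hpos t)).mpr (by linarith [hδ.le])
  have hp_nonneg : ∀ t, 0 ≤ p t := fun t =>
    div_nonneg (le_max_right t 0) (hpos t).le
  set r : A := cfc w c with hr_def
  refine ⟨r, ?_⟩
  have hrcr : r * c * r = cfc p c := by
    rw [hr_def, cfc_conj_self w c hcc hw]
    apply cfc_congr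
    intro t ht
    have ht0 : 0 ≤ t := hσ t ht
    have hmax : max t 0 = t := max_eq_left ht0
    have htδ : (0:ℝ) < t + δ := by linarith
    have hs : Real.sqrt (t + δ) * Real.sqrt (t + δ) = t + δ :=
      Real.mul_self_sqrt htδ.le
    have hsne : Real.sqrt (t + δ) ≠ 0 := ne_of_gt (Real.sqrt_pos.mpr htδ)
    simp only [hw_def, hp_def, hmax]
    field_simp
    rw [sq, hs]
  -- the square root of 1 - p
  set q : A := cfc (fun t => Real.sqrt (1 - p t)) c with hq_def
  have hqsa : IsSelfAdjoint q := IsSelfAdjoint.cfc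
  have hqc : Continuous fun t => Real.sqrt (1 - p t) :=
    Real.continuous_sqrt.comp (continuous_const.sub hp)
  have hqq : q * q = 1 - cfc p c := by
    rw [hq_def, ← cfc_mul _ _ c hqc.continuousOn hqc.continuousOn]
    have h1 : (fun t => Real.sqrt (1 - p t) * Real.sqrt (1 - p t)) = fun t => 1 - p t := by
      funext t
      exact Real.mul_self_sqrt (by linarith [hp_le_one t])
    rw [h1, cfc_sub (fun _ => (1:ℝ)) p c continuous_const.continuousOn hp.continuousOn,
      cfc_const 1 c, map_one]
  -- rearrange
  have hstar : star (e * r) = r * e := by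
    rw [star_mul, hce.star_eq, hr_def, (IsSelfAdjoint.cfc (f := w) (a := c)).star_eq]
  have hmain : (e * r) * c * star (e * r) = e * cfc p c * e := by
    rw [hstar, ← hrcr]
    noncomm_ring
  have hsub2 : (e * r) * c * star (e * r) - e * e = -(e * (q * q) * e) := by
    rw [hmain, hqq]
    noncomm_ring
  rw [hsub2, norm_neg]
  -- C* identity : ‖e (q q) e‖ = ‖q (e e) q‖
  have hC : ‖e * (q * q) * e‖ = ‖q * (e * e) * q‖ := by
    have h1 : e * (q * q) * e = star (q * e) * (q * e) := by
      rw [star_mul, hqsa.star_eq, hce.star_eq]; noncomm_ring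
    have h2 : q * (e * e) * q = (q * e) * star (q * e) := by
      rw [star_mul, hqsa.star_eq, hce.star_eq]; noncomm_ring
    rw [h1, h2, CStarRing.norm_star_mul_self, CStarRing.norm_self_mul_star]
  rw [hC]
  -- monotonicity
  have hmono : q * (e * e) * q ≤ q * c * q := by
    have := star_left_conjugate_le_conjugate hle q
    rwa [hqsa.star_eq] at this
  have hnn : 0 ≤ q * (e * e) * q := by
    have hee : 0 ≤ e * e := by
      have := star_mul_self_nonneg e
      rwa [hce.star_eq] at this
    have := star_left_conjugate_nonneg hee q
    rwa [hqsa.star_eq] at this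
  have hnorm_le : ‖q * (e * e) * q‖ ≤ ‖q * c * q‖ :=
    CStarAlgebra.norm_le_norm_of_nonneg_of_le hnn hmono
  refine hnorm_le.trans ?_
  -- ‖ q c q ‖ ≤ δ
  rw [hq_def, cfc_conj_self _ c hcc hqc]
  apply norm_cfc_le hδ.le
  intro t ht
  have ht0 : 0 ≤ t := hσ t ht
  have hmax : max t 0 = t := max_eq_left ht0
  have h1p : 0 ≤ 1 - p t := by linarith [hp_le_one t]
  have hs : Real.sqrt (1 - p t) * t * Real.sqrt (1 - p t) = (1 - p t) * t := by
    rw [show Real.sqrt (1 - p t) * t * Real.sqrt (1 - p t)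
        = (Real.sqrt (1 - p t) * Real.sqrt (1 - p t)) * t by ring, Real.mul_self_sqrt h1p]
  rw [hs, Real.norm_eq_abs, abs_of_nonneg (mul_nonneg h1p ht0)]
  have htδ : 0 < t + δ := by linarith
  have hval : 1 - p t = δ / (t + δ) := by
    simp only [hp_def, hmax]
    field_simp
    ring
  rw [hval, div_mul_eq_mul_div, div_le_iff₀ htδ]
  nlinarith [hδ.le, ht0]

/-- Quantitative version of `e ≾ e * e`. -/
lemma cuntz_aux2 (e : A) (he : 0 ≤ e) (δ : ℝ) (hδ : 0 < δ) :
    ∃ u : A, IsSelfAdjoint u ∧ ‖u * (e * e) * u - e‖ ≤ Real.sqrt δ := by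
  have hce : IsSelfAdjoint e := IsSelfAdjoint.of_nonneg he
  have hσ : ∀ x ∈ spectrum ℝ e, 0 ≤ x := fun x hx => spectrum_nonneg_of_nonneg he hx
  have hpos : ∀ t : ℝ, 0 < t ^ 2 + δ := fun t => by positivity
  set g : ℝ → ℝ := fun t => Real.sqrt (max t 0 / (t ^ 2 + δ)) with hg_def
  have hg : Continuous g := by
    apply Real.continuous_sqrt.comp
    apply Continuous.div (by fun_prop) (by fun_prop)
    exact fun t => ne_of_gt (hpos t)
  refine ⟨cfc g e, IsSelfAdjoint.cfc, ?_⟩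
  rw [cfc_conj_sq g e hce hg,
    cfc_sub_self (fun t => g t * (t * t) * g t) e hce
      ((hg.mul (continuous_id'.mul continuous_id')).mul hg)]
  apply norm_cfc_le (Real.sqrt_nonneg δ)
  intro t ht
  have ht0 : 0 ≤ t := hσ t ht
  have hmax : max t 0 = t := max_eq_left ht0
  have harg : 0 ≤ max t 0 / (t ^ 2 + δ) := div_nonneg (le_max_right t 0) (hpos t).le
  have hgg : g t * g t = t / (t ^ 2 + δ) := by
    rw [hg_def]
    simp only
    rw [Real.mul_self_sqrt harg, hmax]
  have hval : g t * (t * t) * g t - t = -(δ * t / (t ^ 2 + δ)) := by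
    rw [show g t * (t * t) * g t = (g t * g t) * (t * t) by ring, hgg]
    field_simp
    ring
  rw [hval, Real.norm_eq_abs, abs_neg,
    abs_of_nonneg (by positivity), div_le_iff₀ (hpos t)]
  nlinarith [mul_nonneg (Real.sqrt_nonneg δ) (sq_nonneg (t - Real.sqrt δ)),
    Real.sq_sqrt hδ.le, Real.sqrt_nonneg δ, ht0]

end Aux

/-- If `a, b` are positive with `‖a − b‖ < ε`, then `(a − ε)₊ ≾ b`. -/
theorem stmt_5 {A : Type*} [CStarAlgebra A] [PartialOrder A] [StarOrderedRing A]
    (a b : A) (ha : 0 ≤ a) (hb : 0 ≤ b) (ε : ℝ) (h : ‖a - b‖ < ε) :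
    CuntzSubequiv (cfc (fun t : ℝ => max 0 (t - ε)) a) b := by
  have hε : 0 < ε := lt_of_le_of_lt (norm_nonneg _) h
  have hasa : IsSelfAdjoint a := IsSelfAdjoint.of_nonneg ha
  have hbsa : IsSelfAdjoint b := IsSelfAdjoint.of_nonneg hb
  set f : ℝ → ℝ := fun t => max 0 (t - ε) with hf_def
  have hf : Continuous f := by fun_prop
  have hf0 : ∀ t, 0 ≤ f t := fun t => le_max_left _ _
  set e : A := cfc f a with he_def
  have he0 : 0 ≤ e := cfc_nonneg fun x _ => hf0 x
  set s : A := cfc (fun t => Real.sqrt (f t)) a with hs_def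
  have hsc : Continuous fun t => Real.sqrt (f t) := Real.continuous_sqrt.comp hf
  have hssa : IsSelfAdjoint s := IsSelfAdjoint.cfc
  -- `a - ε•1 ≤ b`
  have hab : a - algebraMap ℝ A ε ≤ b := by
    have h1 : a - b ≤ algebraMap ℝ A ‖a - b‖ :=
      IsSelfAdjoint.le_algebraMap_norm_self (hasa.sub hbsa)
    have h2 : algebraMap ℝ A ‖a - b‖ ≤ algebraMap ℝ A ε := by
      rw [← sub_nonneg, ← map_sub]
      have h3 : (0:ℝ) ≤ ε - ‖a - b‖ := by linarith
      have h4 : algebraMap ℝ A (ε - ‖a - b‖) =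
          star (algebraMap ℝ A (Real.sqrt (ε - ‖a - b‖))) *
            algebraMap ℝ A (Real.sqrt (ε - ‖a - b‖)) := by
        rw [show star (algebraMap ℝ A (Real.sqrt (ε - ‖a - b‖)))
            = algebraMap ℝ A (Real.sqrt (ε - ‖a - b‖)) by
          rw [← algebraMap_star_comm, star_trivial]]
        rw [← map_mul, Real.mul_self_sqrt h3]
      rw [h4]
      exact star_mul_self_nonneg _
    rw [sub_le_comm]
    exact (h1.trans h2)
  -- `e * e = s * (a - ε•1) * s`
  have hsub : a - algebraMap ℝ A ε = cfc (fun t : ℝ => t - ε) a := by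
    rw [cfc_sub (fun t : ℝ => t) (fun _ => ε) a, cfc_id' ℝ a, cfc_const ε a]
  have hEq : s * (a - algebraMap ℝ A ε) * s = e * e := by
    rw [hsub, hs_def, ← cfc_mul _ _ a hsc.continuousOn (by fun_prop),
      ← cfc_mul _ _ a (by fun_prop) hsc.continuousOn, he_def,
      ← cfc_mul f f a hf.continuousOn hf.continuousOn]
    apply cfc_congr
    intro t _
    show Real.sqrt (f t) * (t - ε) * Real.sqrt (f t) = f t * f t
    rcases le_or_gt t ε with htε | htε
    · have : f t = 0 := by
        simp only [hf_def]
        exact max_eq_left (by linarith)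
      rw [this, Real.sqrt_zero]; ring
    · have hft : f t = t - ε := by
        simp only [hf_def]
        exact max_eq_right (by linarith)
      rw [hft, show Real.sqrt (t - ε) * (t - ε) * Real.sqrt (t - ε)
          = (Real.sqrt (t - ε) * Real.sqrt (t - ε)) * (t - ε) by ring,
        Real.mul_self_sqrt (by linarith)]
  have key : e * e ≤ s * b * s := by
    rw [← hEq]
    have := star_left_conjugate_le_conjugate hab s
    rwa [hssa.star_eq] at this
  have hc : 0 ≤ s * b * s := by
    have := star_left_conjugate_nonneg hb s
    rwa [hssa.star_eq] at this
  -- step 1 : `e * e ≾ b`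
  have H1 : ∀ n : ℕ, ∃ r : A,
      ‖(e * r) * (s * b * s) * star (e * r) - e * e‖ ≤ 1 / (n + 1) :=
    fun n => cuntz_aux1 e (s * b * s) he0 hc key _ (by positivity)
  choose r hr using H1
  set w : ℕ → A := fun n => e * r n * s with hw_def
  have hw : ∀ n, ‖w n * b * star (w n) - e * e‖ ≤ 1 / (n + 1) := by
    intro n
    have : w n * b * star (w n) = (e * r n) * (s * b * s) * star (e * r n) := by
      simp only [hw_def, star_mul, hssa.star_eq, mul_assoc]
    rw [this]
    exact hr n
  -- step 2 : `e ≾ e * e`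
  have H2 : ∀ m : ℕ, ∃ u : A, IsSelfAdjoint u ∧
      ‖u * (e * e) * u - e‖ ≤ Real.sqrt (1 / (m + 1)) :=
    fun m => cuntz_aux2 e he0 _ (by positivity)
  choose u hu1 hu2 using H2
  -- combine
  set k : ℕ → ℕ := fun m => ⌈‖u m‖ ^ 2 * (m + 1)⌉₊ with hk_def
  refine ⟨fun m => u m * w (k m), ?_⟩
  have hbound : ∀ m : ℕ, ‖(u m * w (k m)) * b * star (u m * w (k m)) - e‖ ≤
      1 / (m + 1) + Real.sqrt (1 / (m + 1)) := by
    intro m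
    set X := w (k m) * b * star (w (k m)) with hX_def
    have hrw : (u m * w (k m)) * b * star (u m * w (k m)) = u m * X * u m := by
      rw [star_mul, (hu1 m).star_eq, hX_def]
      noncomm_ring
    have hsplit : u m * X * u m - e =
        u m * (X - e * e) * u m + (u m * (e * e) * u m - e) := by noncomm_ring
    rw [hrw, hsplit]
    refine (norm_add_le _ _).trans (add_le_add ?_ (hu2 m))
    calc ‖u m * (X - e * e) * u m‖
        ≤ ‖u m * (X - e * e)‖ * ‖u m‖ := norm_mul_le _ _
      _ ≤ ‖u m‖ * ‖X - e * e‖ * ‖u m‖ := by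
          gcongr; exact norm_mul_le _ _
      _ ≤ ‖u m‖ * (1 / (k m + 1)) * ‖u m‖ :=
          mul_le_mul (mul_le_mul_of_nonneg_left (hw (k m)) (norm_nonneg _)) le_rfl
            (norm_nonneg _) (by positivity)
      _ = ‖u m‖ ^ 2 * (1 / (k m + 1)) := by ring
      _ ≤ 1 / (m + 1) := by
          rw [mul_one_div, div_le_div_iff₀ (by positivity) (by positivity)]
          have h5 : ‖u m‖ ^ 2 * ((m : ℝ) + 1) ≤ (k m : ℝ) := by
            rw [hk_def]; exact Nat.le_ceil _
          linarith
  have h1 : Tendsto (fun m : ℕ => 1 / ((m : ℝ) + 1)) atTop (nhds 0) :=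
    tendsto_one_div_add_atTop_nhds_zero_nat
  have h2 : Tendsto (fun m : ℕ => Real.sqrt (1 / ((m : ℝ) + 1))) atTop (nhds 0) := by
    have := (Real.continuous_sqrt.tendsto' 0 0 Real.sqrt_zero).comp h1
    exact this
  have h3 : Tendsto (fun m : ℕ => 1 / ((m : ℝ) + 1) + Real.sqrt (1 / ((m : ℝ) + 1)))
      atTop (nhds 0) := by simpa using h1.add h2
  rw [tendsto_iff_dist_tendsto_zero]
  exact squeeze_zero (fun m => dist_nonneg)
    (fun m => by rw [dist_eq_norm]; exact hbound m) h3
end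

section
/- Let A be a C*-algebra and a, b positive elements. Then a ≾ b if and only if (a − ε)₊ ≾ b for all ε > 0. -/
open Filter Topology

private noncomputable def cuntzS (ε : ℝ) (t : ℝ) : ℝ :=
  Real.sqrt (max 0 (t - ε) / t)

private lemma cuntzS_cont {ε : ℝ} (hε : 0 < ε) : Continuous (cuntzS ε) := by
  rw [continuous_iff_continuousAt]
  intro t₀
  by_cases h : t₀ = 0
  · subst h
    have hev : cuntzS ε =ᶠ[𝓝 (0:ℝ)] fun _ => 0 := by
      filter_upwards [Metric.ball_mem_nhds (0:ℝ) hε] with t ht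
      have : t - ε < 0 := by
        simp [Real.dist_eq] at ht
        cases abs_lt.mp ht with
        | intro h1 h2 => linarith
      simp [cuntzS, max_eq_left this.le]
    exact continuousAt_const.congr hev.symm
  · exact (Real.continuous_sqrt.continuousAt).comp <|
      ((continuous_const.max (continuous_id.sub continuous_const)).continuousAt).div
        continuousAt_id h

private lemma cuntzS_spec {ε : ℝ} (hε : 0 < ε) (t : ℝ) :
    cuntzS ε t * t * cuntzS ε t = max 0 (t - ε) := by
  have hx : 0 ≤ max 0 (t - ε) / t := by
    rcases le_or_gt t ε with h | h
    · have : max 0 (t - ε) = 0 := max_eq_left (by linarith)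
      simp [this]
    · exact div_nonneg (le_max_left _ _) (by linarith)
  have : cuntzS ε t * t * cuntzS ε t = (max 0 (t - ε) / t) * t := by
    rw [show cuntzS ε t * t * cuntzS ε t = (cuntzS ε t * cuntzS ε t) * t by ring,
      cuntzS, Real.mul_self_sqrt hx]
  rw [this]
  rcases le_or_gt t ε with h | h
  · rcases eq_or_ne t 0 with rfl | ht
    · simp [hε.le]
    · have : max 0 (t - ε) = 0 := max_eq_left (by linarith)
      simp [this]
  · rw [div_mul_cancel₀ _ (by linarith : (0:ℝ) < t).ne']

/-- For positive `a, b` : `a ≾ b` iff `(a − ε)₊ ≾ b` for all `ε > 0`. -/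
theorem stmt_8 {A : Type*} [CStarAlgebra A] [PartialOrder A] [StarOrderedRing A]
    (a b : A) (ha : 0 ≤ a) (hb : 0 ≤ b) :
    CuntzSubequiv a b ↔
      ∀ ε : ℝ, 0 < ε → CuntzSubequiv (cfc (fun t : ℝ => max 0 (t - ε)) a) b := by
  have hsa : IsSelfAdjoint a := ha.isSelfAdjoint
  constructor
  · rintro ⟨v, hv⟩ ε hε
    set w : A := cfc (cuntzS ε) a with hw
    have hws : star w = w := (cfc_predicate (cuntzS ε) a).star_eq
    have hwa : w * a * w = cfc (fun t : ℝ => max 0 (t - ε)) a := by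
      conv_lhs => rw [← cfc_id ℝ a hsa]
      rw [hw, ← cfc_mul _ _ a ((cuntzS_cont hε).continuousOn)
          (continuous_id.continuousOn),
        ← cfc_mul (fun x => cuntzS ε x * id x) _ a (((cuntzS_cont hε).mul continuous_id).continuousOn)
          ((cuntzS_cont hε).continuousOn)]
      exact cfc_congr fun t _ => cuntzS_spec hε t
    refine ⟨fun n => w * v n, ?_⟩
    have : (fun n => (w * v n) * b * star (w * v n))
        = fun n => w * (v n * b * star (v n)) * w := by
      funext n
      simp [star_mul, hws, mul_assoc]
    rw [this, ← hwa]
    exact ((hv.const_mul w).mul_const w)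
  · intro h
    have key : ∀ n : ℕ, ∃ x : A, ‖x * b * star x - a‖ < 2 / (n + 1) := by
      intro n
      have hε : (0:ℝ) < 1 / (n + 1) := by positivity
      obtain ⟨v, hv⟩ := h (1 / (n + 1)) hε
      rw [Metric.tendsto_atTop] at hv
      obtain ⟨N, hN⟩ := hv (1 / (n + 1)) hε
      refine ⟨v N, ?_⟩
      have h1 : ‖v N * b * star (v N) - cfc (fun t : ℝ => max 0 (t - 1 / (n + 1))) a‖
          < 1 / (n + 1) := by
        simpa [dist_eq_norm] using hN N le_rfl
      have h2 : ‖cfc (fun t : ℝ => max 0 (t - 1 / (n + 1))) a - a‖ ≤ 1 / (n + 1) := by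
        have heq : cfc (fun t : ℝ => max 0 (t - 1 / (n + 1)) - t) a
            = cfc (fun t : ℝ => max 0 (t - 1 / (n + 1))) a - a := by
          rw [cfc_sub (fun t : ℝ => max 0 (t - 1 / (n + 1))) (fun t : ℝ => t) a
            (continuous_const.max (continuous_id.sub continuous_const)).continuousOn
            continuous_id.continuousOn, cfc_id' ℝ a hsa]
        rw [← heq]
        refine norm_cfc_le hε.le fun t ht => ?_
        have ht0 : 0 ≤ t := spectrum_nonneg_of_nonneg ha ht
        rw [Real.norm_eq_abs]
        rcases le_or_gt t (1 / (n + 1)) with h' | h'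
        · rw [max_eq_left (by linarith)]
          rw [abs_le]; constructor <;> [linarith; linarith]
        · rw [max_eq_right (by linarith)]
          rw [abs_le]; constructor <;> [linarith; linarith]
      calc ‖v N * b * star (v N) - a‖
          ≤ ‖v N * b * star (v N) - cfc (fun t : ℝ => max 0 (t - 1 / (n + 1))) a‖
            + ‖cfc (fun t : ℝ => max 0 (t - 1 / (n + 1))) a - a‖ := norm_sub_le_norm_sub_add_norm_sub _ _ _
        _ < 1 / (n + 1) + 1 / (n + 1) := by linarith
        _ = 2 / (n + 1) := by ring
    choose w hwn using key
    refine ⟨w, tendsto_iff_norm_sub_tendsto_zero.mpr ?_⟩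
    refine squeeze_zero (fun n => norm_nonneg _) (fun n => (hwn n).le) ?_
    have := (tendsto_const_div_atTop_nhds_zero_nat (2:ℝ)).comp (tendsto_add_atTop_nat 1)
    exact this.congr fun k => by simp
end

section
/- If a ≾ b for positive elements a, b of a unital C*-algebra A and τ is a tracial state on A, then d_τ(a) ≤ d_τ(b), where d_τ(x) = lim_{n→∞} τ(x^{1/n}). -/
set_option maxHeartbeats 1000000
open Filter Topology Polynomial
open scoped ComplexOrder NNReal

namespace CuntzProof


noncomputable def phi {A : Type*} [CStarAlgebra A] (τ : A →L[ℂ] ℂ) (x : A) : ℝ := (τ x).re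

variable {A : Type*} [CStarAlgebra A] [PartialOrder A] [StarOrderedRing A]
variable (τ : A →L[ℂ] ℂ)

lemma contRpow {c : ℝ} (hc : 0 ≤ c) : Continuous fun t : ℝ => t ^ c :=
  continuous_iff_continuousAt.2 fun x => Real.continuousAt_rpow_const x c (Or.inr hc)

lemma phi_sub (x y : A) : phi τ (x - y) = phi τ x - phi τ y := by
  simp [phi, map_sub]

lemma phi_real_smul (r : ℝ) (x : A) : phi τ (r • x) = r * phi τ x := by
  have : r • x = (r : ℂ) • x := by
    rw [← algebraMap_smul ℂ r x]; norm_num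
  rw [phi, this, map_smul]
  simp [phi, Complex.smul_re]

lemma phi_mono (hpos : ∀ x : A, 0 ≤ x → 0 ≤ τ x) {x y : A} (hxy : x ≤ y) :
    phi τ x ≤ phi τ y := by
  have h := hpos (y - x) (sub_nonneg.mpr hxy)
  rw [Complex.le_def] at h
  have := h.1
  rw [map_sub] at this
  simpa [phi] using this

lemma phi_nonneg (hpos : ∀ x : A, 0 ≤ x → 0 ≤ τ x) {x : A} (hx : 0 ≤ x) :
    0 ≤ phi τ x := by
  have h := hpos x hx
  rw [Complex.le_def] at h
  simpa [phi] using h.1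

lemma phi_algebraMap (hone : τ 1 = 1) (r : ℝ) : phi τ (algebraMap ℝ A r) = r := by
  have : algebraMap ℝ A r = r • (1 : A) := Algebra.algebraMap_eq_smul_one r
  rw [this, phi_real_smul, phi, hone]
  simp

lemma abs_phi_le_norm (hpos : ∀ x : A, 0 ≤ x → 0 ≤ τ x) (hone : τ 1 = 1)
    {x : A} (hx : IsSelfAdjoint x) : |phi τ x| ≤ ‖x‖ := by
  rw [abs_le]
  constructor
  · have h1 : -x ≤ algebraMap ℝ A ‖x‖ := by
      have := IsSelfAdjoint.le_algebraMap_norm_self (a := -x) hx.neg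
      simpa [norm_neg] using this
    have := phi_mono τ hpos h1
    rw [phi_algebraMap τ hone] at this
    have hneg : phi τ (-x) = - phi τ x := by simp [phi, map_neg]
    linarith [hneg ▸ this]
  · have h1 : x ≤ algebraMap ℝ A ‖x‖ := IsSelfAdjoint.le_algebraMap_norm_self hx
    have := phi_mono τ hpos h1
    rwa [phi_algebraMap τ hone] at this

lemma spectrum_subset_Icc [Nontrivial A] {x : A} (hx : 0 ≤ x) : spectrum ℝ x ⊆ Set.Icc 0 ‖x‖ := by
  intro t ht
  refine ⟨spectrum_nonneg_of_nonneg hx ht, ?_⟩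
  have := spectrum.norm_le_norm_of_mem (𝕜 := ℝ) ht
  calc t ≤ |t| := le_abs_self t
  _ ≤ ‖x‖ := this

-- (x*y)^(k+1) = x * (y*x)^k * y
private lemma mul_pow_swap (x y : A) (k : ℕ) :
    (x * y) ^ (k + 1) = x * ((y * x) ^ k * y) := by
  induction k with
  | zero => simp
  | succ k ih =>
    rw [pow_succ, ih, pow_succ]
    noncomm_ring

lemma trace_pow_swap (htr : ∀ x y : A, τ (x * y) = τ (y * x)) (x y : A) (k : ℕ) :
    τ ((x * y) ^ k) = τ ((y * x) ^ k) := by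
  cases k with
  | zero => simp
  | succ k =>
    rw [mul_pow_swap, htr, mul_assoc, ← pow_succ]

lemma trace_aeval_swap (htr : ∀ x y : A, τ (x * y) = τ (y * x)) (x y : A) (p : ℝ[X]) :
    τ (aeval (x * y) p) = τ (aeval (y * x) p) := by
  rw [Polynomial.aeval_eq_sum_range (x := x * y), Polynomial.aeval_eq_sum_range (x := y * x),
    map_sum, map_sum]
  refine Finset.sum_congr rfl fun i _ => ?_
  have h1 : ∀ z : A, τ (p.coeff i • z) = (p.coeff i : ℂ) • τ z := by
    intro z
    rw [← algebraMap_smul ℂ (p.coeff i) z, map_smul]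
    norm_num
  rw [h1, h1, trace_pow_swap τ htr]





lemma nonneg_algebraMap {r : ℝ} (hr : 0 ≤ r) : 0 ≤ algebraMap ℝ A r := by
  rw [← cfc_const r (1 : A) (IsSelfAdjoint.one A)]
  exact cfc_nonneg fun t _ => hr

lemma sqrt_monotone [Nontrivial A] {x y : A} (hx : 0 ≤ x) (hxy : x ≤ y) :
    cfc Real.sqrt x ≤ cfc Real.sqrt y := by
  have hy : 0 ≤ y := hx.trans hxy
  have hxsa : IsSelfAdjoint x := .of_nonneg hx
  have hysa : IsSelfAdjoint y := .of_nonneg hy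
  have hsx0 : 0 ≤ cfc Real.sqrt x := cfc_nonneg fun t _ => Real.sqrt_nonneg t
  have key : ∀ ε : ℝ, 0 < ε →
      cfc Real.sqrt x ≤ cfc Real.sqrt y + algebraMap ℝ A (Real.sqrt ε) := by
    intro ε hε
    set E := y + algebraMap ℝ A ε with hE
    have hε1 : (0 : A) ≤ algebraMap ℝ A ε := nonneg_algebraMap hε.le
    have hE0 : 0 ≤ E := add_nonneg hy hε1
    have hEsa : IsSelfAdjoint E := .of_nonneg hE0
    have hxE : x ≤ E := hxy.trans (le_add_of_nonneg_right hε1)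
    have hspecE : ∀ t ∈ spectrum ℝ E, ε ≤ t := by
      rw [← algebraMap_le_iff_le_spectrum (a := E) hEsa]
      exact le_add_of_nonneg_left hy
    have hsqrt_ne : ∀ t ∈ spectrum ℝ E, Real.sqrt (Real.sqrt t) ≠ 0 := by
      intro t ht
      have h1 : 0 < t := lt_of_lt_of_le hε (hspecE t ht)
      positivity
    set g2 : ℝ → ℝ := fun t => (Real.sqrt t)⁻¹ with hg2
    set g4 : ℝ → ℝ := fun t => (Real.sqrt (Real.sqrt t))⁻¹ with hg4
    set p4 : ℝ → ℝ := fun t => Real.sqrt (Real.sqrt t) with hp4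
    have hcp4 : Continuous p4 := Real.continuous_sqrt.comp Real.continuous_sqrt
    have hcg4 : ContinuousOn g4 (spectrum ℝ E) :=
      hcp4.continuousOn.inv₀ hsqrt_ne
    have hcg2 : ContinuousOn g2 (spectrum ℝ E) := by
      refine Real.continuous_sqrt.continuousOn.inv₀ fun t ht => ?_
      have h1 : 0 < t := lt_of_lt_of_le hε (hspecE t ht)
      positivity
    set q := cfc g2 E with hq
    set Q := cfc g4 E with hQ
    set P := cfc p4 E with hP
    set sx := cfc Real.sqrt x with hsx
    have hq_sa : IsSelfAdjoint q := cfc_predicate _ E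
    have hQ_sa : IsSelfAdjoint Q := cfc_predicate _ E
    have hP_sa : IsSelfAdjoint P := cfc_predicate _ E
    have hsx_sa : IsSelfAdjoint sx := cfc_predicate _ x
    have hsxsx : sx * sx = x := by
      rw [hsx, ← cfc_mul _ _ x Real.continuous_sqrt.continuousOn
        Real.continuous_sqrt.continuousOn]
      have h1 : cfc (fun t : ℝ => Real.sqrt t * Real.sqrt t) x = cfc (id : ℝ → ℝ) x :=
        cfc_congr fun t ht => Real.mul_self_sqrt (spectrum_nonneg_of_nonneg hx ht)
      rw [h1]
      exact cfc_id ℝ x hxsa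
    have hq0 : 0 ≤ q := cfc_nonneg fun t _ => by positivity
    have hQQ : Q * Q = q := by
      rw [hQ, hq, ← cfc_mul _ _ E hcg4 hcg4]
      refine cfc_congr fun t ht => ?_
      simp only [hg4, hg2, ← mul_inv]
      rw [Real.mul_self_sqrt (Real.sqrt_nonneg t)]
    have hQP : Q * P = 1 := by
      rw [hQ, hP, ← cfc_mul _ _ E hcg4 hcp4.continuousOn]
      rw [cfc_congr (g := fun _ => (1:ℝ)) fun t ht => inv_mul_cancel₀ (hsqrt_ne t ht)]
      exact cfc_const_one ℝ E hEsa
    have hPQ : P * Q = 1 := by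
      rw [hP, hQ, ← cfc_mul _ _ E hcp4.continuousOn hcg4]
      rw [cfc_congr (g := fun _ => (1:ℝ)) fun t ht => mul_inv_cancel₀ (hsqrt_ne t ht)]
      exact cfc_const_one ℝ E hEsa
    have hPP : P * P = cfc Real.sqrt E := by
      rw [hP, ← cfc_mul _ _ E hcp4.continuousOn hcp4.continuousOn]
      exact cfc_congr fun t ht => Real.mul_self_sqrt (Real.sqrt_nonneg t)
    have hqEq : q * E * q = 1 := by
      have hid : E = cfc (id : ℝ → ℝ) E := (cfc_id ℝ E hEsa).symm
      rw [hq]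
      nth_rewrite 2 [hid]
      rw [← cfc_mul _ _ E hcg2 continuous_id.continuousOn,
        ← cfc_mul (fun x => g2 x * id x) _ E (hcg2.mul continuous_id.continuousOn) hcg2]
      rw [cfc_congr (g := fun _ => (1:ℝ)) ?_]
      · exact cfc_const_one ℝ E hEsa
      · intro t ht
        have h1 : 0 < t := lt_of_lt_of_le hε (hspecE t ht)
        have h2 : Real.sqrt t ≠ 0 := by positivity
        simp only [hg2, id_eq]
        rw [← Real.mul_self_sqrt h1.le]
        field_simp
        rw [Real.sqrt_sq (Real.sqrt_nonneg t)]
    have hqxq_le_one : q * x * q ≤ 1 := by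
      have h := star_left_conjugate_le_conjugate hxE q
      rw [hq_sa.star_eq] at h
      rwa [hqEq] at h
    set w := sx * q with hw
    have hww : star w * w = q * x * q := by
      rw [hw, star_mul, hq_sa.star_eq, hsx_sa.star_eq]
      calc q * sx * (sx * q) = q * (sx * sx) * q := by noncomm_ring
      _ = q * x * q := by rw [hsxsx]
    have hqxq0 : 0 ≤ q * x * q := hww ▸ star_mul_self_nonneg w
    have hnormw : ‖w‖ ≤ 1 := by
      have h1 : ‖star w * w‖ ≤ 1 := by
        rw [hww]
        exact (CStarAlgebra.norm_le_one_iff_of_nonneg _ hqxq0).mpr hqxq_le_one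
      rw [CStarRing.norm_star_mul_self] at h1
      nlinarith [norm_nonneg w]
    set z := Q * sx * Q with hz
    have hz0 : 0 ≤ z := by
      have h := star_left_conjugate_le_conjugate hsx0 Q
      rw [hQ_sa.star_eq] at h
      simpa using h
    have hzsa : IsSelfAdjoint z := .of_nonneg hz0
    have hspec_z : ∀ t ∈ spectrum ℝ z, t ≤ 1 := by
      intro t ht
      rcases eq_or_ne t 0 with h0 | h0
      · simp [h0]
      · have hmem : t ∈ spectrum ℝ (Q * (sx * Q)) \ {0} := by
          rw [← mul_assoc]; exact ⟨ht, h0⟩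
        rw [spectrum.nonzero_mul_comm] at hmem
        have hmem2 : t ∈ spectrum ℝ w := by
          have : sx * Q * Q = w := by rw [hw, mul_assoc, hQQ]
          rw [this] at hmem
          exact hmem.1
        calc t ≤ |t| := le_abs_self t
        _ ≤ ‖w‖ := spectrum.norm_le_norm_of_mem hmem2
        _ ≤ 1 := hnormw
    have hz_le_one : z ≤ 1 := CFC.le_one hspec_z hzsa
    have hfin : sx ≤ cfc Real.sqrt E := by
      have h := star_left_conjugate_le_conjugate hz_le_one P
      rw [hP_sa.star_eq, mul_one] at h
      have hL : P * (Q * sx * Q) * P = sx := by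
        calc P * (Q * sx * Q) * P = (P * Q) * sx * (Q * P) := by noncomm_ring
        _ = sx := by rw [hPQ, hQP, one_mul, mul_one]
      rw [hL, hPP] at h
      exact h
    -- now translate cfc √ E
    have hspecy := spectrum_nonneg_of_nonneg (𝕜 := ℝ) hy
    have hcomp : cfc Real.sqrt E = cfc (fun t => Real.sqrt (t + ε)) y := by
      have h1 : cfc (fun t : ℝ => t + ε) y = E := by
        rw [cfc_add_const ε (fun t => t) y continuous_id.continuousOn hysa, cfc_id' ℝ y hysa]
      rw [← h1, ← cfc_comp' Real.sqrt (fun t : ℝ => t + ε) y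
        Real.continuous_sqrt.continuousOn (by fun_prop) hysa]
    have hptwise : cfc (fun t => Real.sqrt (t + ε)) y ≤
        cfc Real.sqrt y + algebraMap ℝ A (Real.sqrt ε) := by
      have h2 : cfc (fun t => Real.sqrt t + Real.sqrt ε) y =
          cfc Real.sqrt y + algebraMap ℝ A (Real.sqrt ε) :=
        cfc_add_const (Real.sqrt ε) Real.sqrt y Real.continuous_sqrt.continuousOn hysa
      rw [← h2]
      refine cfc_mono (fun t ht => ?_) (by fun_prop) (by fun_prop)
      have ht0 : 0 ≤ t := hspecy ht
      have h3 : t + ε ≤ (Real.sqrt t + Real.sqrt ε) ^ 2 := by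
        have := Real.sq_sqrt ht0
        have := Real.sq_sqrt hε.le
        have := Real.sqrt_nonneg t
        have := Real.sqrt_nonneg ε
        nlinarith
      calc Real.sqrt (t + ε) ≤ Real.sqrt ((Real.sqrt t + Real.sqrt ε) ^ 2) :=
            Real.sqrt_le_sqrt h3
      _ = Real.sqrt t + Real.sqrt ε := by
            rw [Real.sqrt_sq (by positivity)]
    exact hfin.trans (hcomp ▸ hptwise)
  -- limit as ε → 0
  have hcl := CStarAlgebra.isClosed_nonneg (A := A)
  have htend : Tendsto (fun n : ℕ => cfc Real.sqrt y +
      algebraMap ℝ A (Real.sqrt (((n : ℝ) + 1)⁻¹)) - cfc Real.sqrt x) atTop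
      (nhds (cfc Real.sqrt y - cfc Real.sqrt x)) := by
    have h1 : Tendsto (fun n : ℕ => ((n : ℝ) + 1)⁻¹) atTop (nhds 0) :=
      tendsto_one_div_add_atTop_nhds_zero_nat.congr (by simp [one_div])
    have h2 : Tendsto (fun n : ℕ => algebraMap ℝ A (Real.sqrt (((n : ℝ) + 1)⁻¹))) atTop
        (nhds 0) := by
      have h3 : Tendsto (fun t : ℝ => algebraMap ℝ A (Real.sqrt t)) (nhds 0)
          (nhds (algebraMap ℝ A (Real.sqrt 0))) :=
        ((continuous_algebraMap ℝ A).comp Real.continuous_sqrt).continuousAt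
      rw [Real.sqrt_zero, map_zero] at h3
      exact h3.comp h1
    have := (tendsto_const_nhds (x := cfc Real.sqrt y) (f := atTop (α := ℕ))).add h2
    simpa using this.sub tendsto_const_nhds
  have hmem : ∀ n : ℕ, (0:A) ≤ cfc Real.sqrt y +
      algebraMap ℝ A (Real.sqrt (((n : ℝ) + 1)⁻¹)) - cfc Real.sqrt x := by
    intro n
    have := key ((n : ℝ) + 1)⁻¹ (by positivity)
    simpa [sub_nonneg] using this
  have := hcl.mem_of_tendsto htend (Filter.Eventually.of_forall hmem)
  simpa [sub_nonneg] using this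







-- subadditivity of rpow
lemma rpow_add_le {t e p : ℝ} (ht : 0 ≤ t) (he : 0 ≤ e) (hp : 0 ≤ p) (hp1 : p ≤ 1) :
    (t + e) ^ p ≤ t ^ p + e ^ p := by
  have h := NNReal.rpow_add_le_add_rpow t.toNNReal e.toNNReal hp hp1
  have key : ((t.toNNReal + e.toNNReal : ℝ≥0) : ℝ) = t + e := by
    push_cast [Real.coe_toNNReal t ht, Real.coe_toNNReal e he]
    ring
  calc (t + e) ^ p = ((t.toNNReal + e.toNNReal : ℝ≥0) : ℝ) ^ p := by rw [key]
  _ = (((t.toNNReal + e.toNNReal) ^ p : ℝ≥0) : ℝ) := (NNReal.coe_rpow _ _).symm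
  _ ≤ ((t.toNNReal ^ p + e.toNNReal ^ p : ℝ≥0) : ℝ) := NNReal.coe_le_coe.2 h
  _ = t ^ p + e ^ p := by
      push_cast [NNReal.coe_rpow, Real.coe_toNNReal t ht, Real.coe_toNNReal e he]
      ring

lemma rpow_dyadic_mono_core [Nontrivial A] (k : ℕ) {x y : A} (hx : 0 ≤ x) (hxy : x ≤ y) :
    cfc (fun t : ℝ => t ^ (((2:ℝ) ^ k)⁻¹)) x ≤ cfc (fun t : ℝ => t ^ (((2:ℝ) ^ k)⁻¹)) y := by
  induction k generalizing x y with
  | zero =>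
    have e : ∀ z : A, 0 ≤ z → cfc (fun t : ℝ => t ^ (((2:ℝ) ^ 0)⁻¹)) z = z := by
      intro z hz
      have h1 : cfc (fun t : ℝ => t ^ (((2:ℝ) ^ 0)⁻¹)) z = cfc (id : ℝ → ℝ) z := by
        refine cfc_congr fun t ht => ?_
        simp
      rw [h1, cfc_id ℝ z (.of_nonneg hz)]
    rw [e x hx, e y (hx.trans hxy)]; exact hxy
  | succ k ih =>
    have hy := hx.trans hxy
    have hcont : Continuous fun t : ℝ => t ^ (((2:ℝ) ^ k)⁻¹) := contRpow (by positivity)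
    have e : ∀ z : A, 0 ≤ z → cfc (fun t : ℝ => t ^ (((2:ℝ) ^ (k+1))⁻¹)) z
        = cfc Real.sqrt (cfc (fun t : ℝ => t ^ (((2:ℝ) ^ k)⁻¹)) z) := by
      intro z hz
      rw [← cfc_comp' Real.sqrt _ z Real.continuous_sqrt.continuousOn hcont.continuousOn
        (.of_nonneg hz)]
      refine cfc_congr fun t ht => ?_
      have ht0 : 0 ≤ t := spectrum_nonneg_of_nonneg (𝕜 := ℝ) hz ht
      have h2 : ((2:ℝ) ^ (k+1))⁻¹ = ((2:ℝ) ^ k)⁻¹ * (1/2 : ℝ) := by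
        rw [pow_succ, mul_inv]; ring
      rw [h2, Real.rpow_mul ht0, Real.sqrt_eq_rpow]
    rw [e x hx, e y hy]
    exact sqrt_monotone (cfc_nonneg fun t ht => Real.rpow_nonneg
      (spectrum_nonneg_of_nonneg (𝕜 := ℝ) hx ht) _) (ih hx hxy)

lemma rpow_dyadic_mono [Nontrivial A] {n : ℕ} (k : ℕ) (hnk : (n : ℝ) = 2 ^ k) {x y : A}
    (hx : 0 ≤ x) (hxy : x ≤ y) :
    cfc (fun t : ℝ => t ^ ((n:ℝ)⁻¹)) x ≤ cfc (fun t : ℝ => t ^ ((n:ℝ)⁻¹)) y := by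
  simp only [hnk]
  exact rpow_dyadic_mono_core k hx hxy


-- appended to full.lean inside namespace CuntzProof (for testing: standalone with imports)

lemma trace_cfc_swap [Nontrivial A] (hpos : ∀ x : A, 0 ≤ x → 0 ≤ τ x) (hone : τ 1 = 1)
    (htr : ∀ x y : A, τ (x * y) = τ (y * x)) (x : A) (f : ℝ → ℝ) (hf : Continuous f) :
    phi τ (cfc f (x * star x)) = phi τ (cfc f (star x * x)) := by
  set y₁ := x * star x with hy₁
  set y₂ := star x * x with hy₂
  have hy₁0 : 0 ≤ y₁ := mul_star_self_nonneg x
  have hy₂0 : 0 ≤ y₂ := star_mul_self_nonneg x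
  set R := max ‖y₁‖ ‖y₂‖ with hR
  have hspec₁ : spectrum ℝ y₁ ⊆ Set.Icc 0 R :=
    (spectrum_subset_Icc hy₁0).trans (Set.Icc_subset_Icc le_rfl (le_max_left _ _))
  have hspec₂ : spectrum ℝ y₂ ⊆ Set.Icc 0 R :=
    (spectrum_subset_Icc hy₂0).trans (Set.Icc_subset_Icc le_rfl (le_max_right _ _))
  have key : ∀ ε : ℝ, 0 < ε →
      |phi τ (cfc f y₁) - phi τ (cfc f y₂)| ≤ 2 * ε := by
    intro ε hε
    obtain ⟨p, hp⟩ := exists_polynomial_near_of_continuousOn 0 R f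
      (hf.continuousOn) ε hε
    have hd : ∀ (z : A), 0 ≤ z → spectrum ℝ z ⊆ Set.Icc 0 R →
        |phi τ (cfc f z) - phi τ (aeval z p)| ≤ ε := by
      intro z hz hzspec
      have hzsa : IsSelfAdjoint z := IsSelfAdjoint.of_nonneg hz
      have h1 : cfc f z - aeval z p = cfc (fun t => f t - p.eval t) z := by
        rw [cfc_sub f (fun t => p.eval t) z (hf.continuousOn)
          (Polynomial.continuous_aeval p).continuousOn, cfc_polynomial p z hzsa]
      have h2 : ‖cfc f z - aeval z p‖ ≤ ε := by
        rw [h1]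
        refine norm_cfc_le hε.le fun t ht => ?_
        have := hp t (hzspec ht)
        rw [Real.norm_eq_abs, abs_sub_comm]
        exact this.le
      have h3 : IsSelfAdjoint (cfc f z - aeval z p) := h1 ▸ cfc_predicate _ z
      have h4 := (abs_phi_le_norm τ hpos hone h3).trans h2
      rwa [phi_sub] at h4
    have heq : phi τ (aeval y₁ p) = phi τ (aeval y₂ p) := by
      rw [hy₁, hy₂]
      unfold phi
      rw [trace_aeval_swap τ htr]
    have h₁ := hd y₁ hy₁0 hspec₁
    have h₂ := hd y₂ hy₂0 hspec₂
    rw [abs_le] at h₁ h₂ ⊢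
    constructor <;> linarith [heq]
  by_contra hne
  have hpos2 : 0 < |phi τ (cfc f y₁) - phi τ (cfc f y₂)| :=
    abs_pos.mpr (sub_ne_zero.mpr hne)
  have := key (|phi τ (cfc f y₁) - phi τ (cfc f y₂)| / 4) (by linarith)
  linarith

lemma smul_nonneg'' {r : ℝ} (hr : 0 ≤ r) {x : A} (hx : 0 ≤ x) : 0 ≤ r • x := by
  rw [← cfc_const_mul_id r x (.of_nonneg hx)]
  exact cfc_nonneg fun t ht => mul_nonneg hr (spectrum_nonneg_of_nonneg (𝕜 := ℝ) hx ht)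

lemma phi_add_algebraMap (hone : τ 1 = 1) (z : A) (r : ℝ) :
    phi τ (z + algebraMap ℝ A r) = phi τ z + r := by
  unfold phi
  rw [map_add, Complex.add_re]
  have := phi_algebraMap τ hone r
  unfold phi at this
  rw [this]

lemma cfc_rpow_smul [Nontrivial A] {s : ℝ} (hs : 0 ≤ s) {x : A} (hx : 0 ≤ x) (n : ℕ) :
    cfc (fun t : ℝ => t ^ ((n:ℝ)⁻¹)) (s • x)
      = s ^ ((n:ℝ)⁻¹) • cfc (fun t : ℝ => t ^ ((n:ℝ)⁻¹)) x := by
  have hc : Continuous fun t : ℝ => t ^ ((n:ℝ)⁻¹) := contRpow (by positivity)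
  have hxsa : IsSelfAdjoint x := .of_nonneg hx
  rw [← cfc_comp_smul s (fun t : ℝ => t ^ ((n:ℝ)⁻¹)) x hc.continuousOn hxsa]
  have h1 : cfc (fun t : ℝ => (s • t) ^ ((n:ℝ)⁻¹)) x
      = cfc (fun t : ℝ => s ^ ((n:ℝ)⁻¹) * t ^ ((n:ℝ)⁻¹)) x := by
    refine cfc_congr fun t ht => ?_
    have ht0 : 0 ≤ t := spectrum_nonneg_of_nonneg (𝕜 := ℝ) hx ht
    rw [smul_eq_mul, Real.mul_rpow hs ht0]
  rw [h1, cfc_const_mul _ _ x hc.continuousOn]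

-- bound : phi of cfc rpow bounded by max 1 ‖x‖
lemma phi_cfc_rpow_le [Nontrivial A] (hpos : ∀ x : A, 0 ≤ x → 0 ≤ τ x) (hone : τ 1 = 1)
    {x : A} (hx : 0 ≤ x) (n : ℕ) :
    phi τ (cfc (fun t : ℝ => t ^ ((n:ℝ)⁻¹)) x) ≤ max 1 ‖x‖ := by
  have hxsa : IsSelfAdjoint x := .of_nonneg hx
  have h1 : ‖cfc (fun t : ℝ => t ^ ((n:ℝ)⁻¹)) x‖ ≤ max 1 ‖x‖ := by
    refine norm_cfc_le (le_max_of_le_left zero_le_one) fun t ht => ?_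
    have ht0 : 0 ≤ t := spectrum_nonneg_of_nonneg (𝕜 := ℝ) hx ht
    rw [Real.norm_eq_abs, abs_of_nonneg (Real.rpow_nonneg ht0 _)]
    rcases le_or_gt t 1 with h | h
    · exact le_max_of_le_left (Real.rpow_le_one ht0 h (by positivity))
    · refine le_max_of_le_right ?_
      calc t ^ ((n:ℝ)⁻¹) ≤ t ^ (1:ℝ) := by
            refine Real.rpow_le_rpow_of_exponent_le h.le ?_
            rcases Nat.eq_zero_or_pos n with h0 | h0
            · simp [h0]
            · rw [inv_le_one_iff₀]; right; exact_mod_cast h0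
      _ = t := Real.rpow_one t
      _ ≤ ‖x‖ := by
            have := spectrum.norm_le_norm_of_mem (𝕜 := ℝ) ht
            calc t ≤ |t| := le_abs_self t
            _ ≤ ‖x‖ := this
  have h2 := (abs_phi_le_norm τ hpos hone (cfc_predicate _ x)).trans h1
  exact (le_abs_self _).trans h2

lemma phi_cfc_rpow_nonneg (hpos : ∀ x : A, 0 ≤ x → 0 ≤ τ x) {x : A} (hx : 0 ≤ x) (n : ℕ) :
    0 ≤ phi τ (cfc (fun t : ℝ => t ^ ((n:ℝ)⁻¹)) x) :=
  phi_nonneg τ hpos (cfc_nonneg fun t ht =>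
    Real.rpow_nonneg (spectrum_nonneg_of_nonneg (𝕜 := ℝ) hx ht) _)

-- monotonicity in the exponent index for ‖x‖ ≤ 1
lemma phi_cfc_rpow_mono_exp [Nontrivial A] (hpos : ∀ x : A, 0 ≤ x → 0 ≤ τ x)
    {x : A} (hx : 0 ≤ x) (hx1 : ‖x‖ ≤ 1) {n j : ℕ} (hn : 1 ≤ n) (hnj : n ≤ j) :
    phi τ (cfc (fun t : ℝ => t ^ ((n:ℝ)⁻¹)) x) ≤ phi τ (cfc (fun t : ℝ => t ^ ((j:ℝ)⁻¹)) x) := by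
  refine phi_mono τ hpos ?_
  refine cfc_mono (fun t ht => ?_) (contRpow (by positivity)).continuousOn
    (contRpow (by positivity)).continuousOn
  have ht0 : 0 ≤ t := spectrum_nonneg_of_nonneg (𝕜 := ℝ) hx ht
  have ht1 : t ≤ 1 := by
    have h1 := spectrum.norm_le_norm_of_mem (𝕜 := ℝ) ht
    have := (le_abs_self t).trans h1
    linarith
  have hn0 : (n:ℝ) ≠ 0 := Nat.cast_ne_zero.mpr (by omega)
  have hj0 : (j:ℝ) ≠ 0 := Nat.cast_ne_zero.mpr (by omega)
  rcases eq_or_lt_of_le ht0 with h0 | h0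
  · rw [← h0, Real.zero_rpow (inv_ne_zero hn0), Real.zero_rpow (inv_ne_zero hj0)]
  · refine Real.rpow_le_rpow_of_exponent_ge h0 ht1 ?_
    have hnpos : (0:ℝ) < n := by
      rcases (Nat.cast_pos (α := ℝ)).mpr (show 0 < n by omega) with h; exact h
    refine inv_anti₀ hnpos ?_
    exact_mod_cast hnj

lemma main_norm [Nontrivial A] (hpos : ∀ x : A, 0 ≤ x → 0 ≤ τ x) (hone : τ 1 = 1)
    (htr : ∀ x y : A, τ (x * y) = τ (y * x))
    {a b : A} (ha : 0 ≤ a) (hb : 0 ≤ b) (hna : ‖a‖ ≤ 1) (hnb : ‖b‖ ≤ 1)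
    (v : ℕ → A) (hv : Tendsto (fun n => v n * b * star (v n)) atTop (nhds a)) :
    Filter.limsup (fun n : ℕ => phi τ (cfc (fun t : ℝ => t ^ ((n : ℝ)⁻¹)) a)) atTop ≤
    Filter.limsup (fun n : ℕ => phi τ (cfc (fun t : ℝ => t ^ ((n : ℝ)⁻¹)) b)) atTop := by
  set u : ℕ → ℝ := fun n => phi τ (cfc (fun t : ℝ => t ^ ((n : ℝ)⁻¹)) a) with hu
  set w : ℕ → ℝ := fun n => phi τ (cfc (fun t : ℝ => t ^ ((n : ℝ)⁻¹)) b) with hw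
  have hu_nonneg : ∀ n, 0 ≤ u n := fun n => phi_cfc_rpow_nonneg τ hpos ha n
  have hw_nonneg : ∀ n, 0 ≤ w n := fun n => phi_cfc_rpow_nonneg τ hpos hb n
  have hu_le : ∀ n, u n ≤ 1 := fun n => by
    have := phi_cfc_rpow_le τ hpos hone ha n
    rwa [max_eq_left hna] at this
  have hw_le : ∀ n, w n ≤ 1 := fun n => by
    have := phi_cfc_rpow_le τ hpos hone hb n
    rwa [max_eq_left hnb] at this
  have hw_bdd : IsBoundedUnder (· ≤ ·) atTop w :=
    ⟨1, Filter.eventually_map.mpr (Filter.Eventually.of_forall hw_le)⟩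
  have hu_cobdd : IsCoboundedUnder (· ≤ ·) atTop u :=
    Filter.isCoboundedUnder_le_of_le atTop hu_nonneg
  set L := Filter.limsup w atTop with hL
  have hL0 : 0 ≤ L :=
    Filter.le_limsup_of_frequently_le (Filter.Frequently.of_forall hw_nonneg) hw_bdd
  have hwL : ∀ n, 1 ≤ n → w n ≤ L := by
    intro n hn
    refine Filter.le_limsup_of_frequently_le (Filter.Eventually.frequently ?_) hw_bdd
    filter_upwards [eventually_ge_atTop n] with j hj
    exact phi_cfc_rpow_mono_exp τ hpos hb hnb hn hj
  have key : ∀ δ : ℝ, 0 < δ → δ ≤ 1 → ∀ k : ℕ, u (2 ^ k) ≤ (1+δ)^2 * L + 2*δ := by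
    intro δ hδ hδ1 k
    set m : ℕ := 2 ^ k with hm
    have hm1 : 1 ≤ m := Nat.one_le_two_pow
    have hmR : (m : ℝ) = 2 ^ k := by rw [hm]; push_cast; ring
    have hmne : (m : ℝ) ≠ 0 := by rw [hmR]; positivity
    have hminv1 : ((m:ℝ))⁻¹ ≤ 1 := by
      rw [inv_le_one_iff₀]; right; exact_mod_cast hm1
    have hminv0 : (0:ℝ) ≤ (m:ℝ)⁻¹ := by positivity
    have hcontm : Continuous fun t : ℝ => t ^ ((m:ℝ)⁻¹) := contRpow hminv0
    set ε := min (δ ^ m) δ with hε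
    have hε0 : 0 < ε := lt_min (pow_pos hδ m) hδ
    have hεδ : ε ≤ δ := min_le_right _ _
    obtain ⟨N, hN⟩ := Metric.tendsto_atTop.mp hv ε hε0
    set V := v N with hV
    set y := V * b * star V with hy
    have hdist : ‖y - a‖ < ε := by
      have := hN N le_rfl
      rwa [dist_eq_norm] at this
    set sb := cfc Real.sqrt b with hsb
    have hsb_sa : IsSelfAdjoint sb := cfc_predicate _ b
    have hsbsb : sb * sb = b := by
      rw [hsb, ← cfc_mul _ _ b Real.continuous_sqrt.continuousOn
        Real.continuous_sqrt.continuousOn]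
      have h1 : cfc (fun t : ℝ => Real.sqrt t * Real.sqrt t) b = cfc (id : ℝ → ℝ) b :=
        cfc_congr fun t ht => Real.mul_self_sqrt (spectrum_nonneg_of_nonneg (𝕜 := ℝ) hb ht)
      rw [h1, cfc_id ℝ b (.of_nonneg hb)]
    set x := V * sb with hx
    have hxstar : star x = sb * star V := by rw [hx, star_mul, hsb_sa.star_eq]
    have hyxx : y = x * star x := by
      rw [hx, hxstar, hy, ← hsbsb]; noncomm_ring
    have hy0 : 0 ≤ y := hyxx ▸ mul_star_self_nonneg x
    have hyn : ‖y‖ ≤ 1 + δ := by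
      have h1 : ‖y‖ ≤ ‖a‖ + ‖y - a‖ := norm_le_norm_add_norm_sub' y a
      have h2 : ε ≤ δ := hεδ
      linarith [hdist.le]
    have haley : a ≤ y + algebraMap ℝ A ε := by
      have h1 : a - y ≤ algebraMap ℝ A ‖a - y‖ :=
        IsSelfAdjoint.le_algebraMap_norm_self ((IsSelfAdjoint.of_nonneg ha).sub
          (IsSelfAdjoint.of_nonneg hy0))
      have h2 : algebraMap ℝ A ‖a - y‖ ≤ algebraMap ℝ A ε := by
        rw [← sub_nonneg, ← map_sub]
        refine nonneg_algebraMap ?_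
        rw [sub_nonneg, norm_sub_rev]
        exact hdist.le
      calc a = y + (a - y) := by abel
      _ ≤ y + algebraMap ℝ A ε := add_le_add (le_refl y) (h1.trans h2)
    -- step 1 : cfc f_m a ≤ cfc f_m y + δ·1
    have hstep1 : cfc (fun t : ℝ => t ^ ((m:ℝ)⁻¹)) a
        ≤ cfc (fun t : ℝ => t ^ ((m:ℝ)⁻¹)) y + algebraMap ℝ A δ := by
      have hmono := rpow_dyadic_mono k hmR ha haley
      have hcomp : cfc (fun t : ℝ => t ^ ((m:ℝ)⁻¹)) (y + algebraMap ℝ A ε)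
          = cfc (fun t : ℝ => (t + ε) ^ ((m:ℝ)⁻¹)) y := by
        have h1 : cfc (fun t : ℝ => t + ε) y = y + algebraMap ℝ A ε := by
          rw [cfc_add_const ε (fun t => t) y continuous_id.continuousOn
            (IsSelfAdjoint.of_nonneg hy0), cfc_id' ℝ y (IsSelfAdjoint.of_nonneg hy0)]
        rw [← h1, ← cfc_comp' (fun t : ℝ => t ^ ((m:ℝ)⁻¹)) (fun t : ℝ => t + ε) y
          hcontm.continuousOn (by fun_prop) (IsSelfAdjoint.of_nonneg hy0)]
      have hptw : cfc (fun t : ℝ => (t + ε) ^ ((m:ℝ)⁻¹)) y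
          ≤ cfc (fun t : ℝ => t ^ ((m:ℝ)⁻¹) + δ) y := by
        refine cfc_mono (fun t ht => ?_) (hcontm.comp (continuous_add_right ε)).continuousOn
          (by fun_prop)
        have ht0 : 0 ≤ t := spectrum_nonneg_of_nonneg (𝕜 := ℝ) hy0 ht
        have h2 : (t + ε) ^ ((m:ℝ)⁻¹) ≤ t ^ ((m:ℝ)⁻¹) + ε ^ ((m:ℝ)⁻¹) :=
          rpow_add_le ht0 hε0.le hminv0 hminv1
        have h3 : ε ^ ((m:ℝ)⁻¹) ≤ δ := by
          calc ε ^ ((m:ℝ)⁻¹) ≤ (δ ^ m) ^ ((m:ℝ)⁻¹) :=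
                Real.rpow_le_rpow hε0.le (min_le_left _ _) hminv0
          _ = δ := by
                rw [← Real.rpow_natCast δ m, ← Real.rpow_mul hδ.le,
                  mul_inv_cancel₀ hmne, Real.rpow_one]
        linarith
      have hsplit : cfc (fun t : ℝ => t ^ ((m:ℝ)⁻¹) + δ) y
          = cfc (fun t : ℝ => t ^ ((m:ℝ)⁻¹)) y + algebraMap ℝ A δ :=
        cfc_add_const δ _ y hcontm.continuousOn (IsSelfAdjoint.of_nonneg hy0)
      calc cfc (fun t : ℝ => t ^ ((m:ℝ)⁻¹)) a
          ≤ cfc (fun t : ℝ => t ^ ((m:ℝ)⁻¹)) (y + algebraMap ℝ A ε) := hmono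
      _ = cfc (fun t : ℝ => (t + ε) ^ ((m:ℝ)⁻¹)) y := hcomp
      _ ≤ cfc (fun t : ℝ => t ^ ((m:ℝ)⁻¹) + δ) y := hptw
      _ = cfc (fun t : ℝ => t ^ ((m:ℝ)⁻¹)) y + algebraMap ℝ A δ := hsplit
    have hchain1 : u m ≤ phi τ (cfc (fun t : ℝ => t ^ ((m:ℝ)⁻¹)) y) + δ := by
      have h1 := phi_mono τ hpos hstep1
      rwa [phi_add_algebraMap τ hone] at h1
    -- trace swap
    set c := star x * x with hc
    have hc0 : 0 ≤ c := star_mul_self_nonneg x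
    have hswap : phi τ (cfc (fun t : ℝ => t ^ ((m:ℝ)⁻¹)) y)
        = phi τ (cfc (fun t : ℝ => t ^ ((m:ℝ)⁻¹)) c) := by
      rw [hyxx, hc]
      exact trace_cfc_swap τ hpos hone htr x _ hcontm
    -- c ≤ K • b
    set K := max (‖V‖^2) 1 with hK
    have hK1 : (1:ℝ) ≤ K := le_max_right _ _
    have hK0 : (0:ℝ) < K := lt_of_lt_of_le one_pos hK1
    have hVV : star V * V ≤ algebraMap ℝ A K := by
      refine (CStarAlgebra.star_mul_le_algebraMap_norm_sq).trans ?_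
      rw [← sub_nonneg, ← map_sub]
      exact nonneg_algebraMap (by rw [sub_nonneg]; exact le_max_left _ _)
    have hcKb : c ≤ K • b := by
      have h2 := star_left_conjugate_le_conjugate hVV sb
      rw [hsb_sa.star_eq] at h2
      have hLc : sb * (star V * V) * sb = c := by
        rw [hc, hxstar, hx]; noncomm_ring
      have hRc : sb * algebraMap ℝ A K * sb = K • b := by
        rw [Algebra.algebraMap_eq_smul_one, mul_smul_comm, mul_one, smul_mul_assoc, hsbsb]
      rwa [hLc, hRc] at h2
    have hcnorm : ‖c‖ ≤ 1 + δ := by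
      have h1 : ‖star x * x‖ = ‖x * star x‖ := by
        rw [CStarRing.norm_star_mul_self, CStarRing.norm_self_mul_star]
      calc ‖c‖ = ‖y‖ := by rw [hc, h1, ← hyxx]
      _ ≤ 1 + δ := hyn
    -- choose n
    obtain ⟨N₀, hN₀⟩ := pow_unbounded_of_one_lt (K / δ ^ m) (show (1:ℝ) < 1 + δ by linarith)
    set n : ℕ := 2 ^ N₀ with hn
    have hn1 : 1 ≤ n := Nat.one_le_two_pow
    have hnR : (n : ℝ) = 2 ^ N₀ := by rw [hn]; push_cast; ring
    have hnne : (n : ℝ) ≠ 0 := by rw [hnR]; positivity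
    have hninv0 : (0:ℝ) ≤ (n:ℝ)⁻¹ := by positivity
    have hcontn : Continuous fun t : ℝ => t ^ ((n:ℝ)⁻¹) := contRpow hninv0
    have hKn : K / δ ^ m ≤ (1+δ) ^ n := by
      refine hN₀.le.trans ?_
      exact pow_le_pow_right₀ (by linarith) (Nat.lt_two_pow_self (n := N₀)).le
    have hdm0 : (0:ℝ) < δ ^ m := pow_pos hδ m
    set D := (1 + δ) / (δ ^ m) ^ ((n:ℝ)⁻¹) with hD
    have hdmp : (0:ℝ) < (δ ^ m) ^ ((n:ℝ)⁻¹) := Real.rpow_pos_of_pos hdm0 _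
    have hD0 : 0 ≤ D := by positivity
    have hKp0 : (0:ℝ) ≤ K ^ ((n:ℝ)⁻¹) := Real.rpow_nonneg hK0.le _
    have hDK : D * K ^ ((n:ℝ)⁻¹) ≤ (1+δ)^2 := by
      have h2 : (K / δ ^ m) ^ ((n:ℝ)⁻¹) ≤ ((1+δ)^n : ℝ) ^ ((n:ℝ)⁻¹) :=
        Real.rpow_le_rpow (by positivity) hKn (by positivity)
      have h3 : ((1+δ)^n : ℝ) ^ ((n:ℝ)⁻¹) = 1 + δ := by
        rw [← Real.rpow_natCast (1+δ) n, ← Real.rpow_mul (by linarith),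
          mul_inv_cancel₀ hnne, Real.rpow_one]
      rw [h3] at h2
      have h4 : D * K ^ ((n:ℝ)⁻¹) = (1+δ) * (K / δ^m) ^ ((n:ℝ)⁻¹) := by
        rw [hD, Real.div_rpow hK0.le hdm0.le]
        field_simp
      rw [h4, pow_two]
      exact mul_le_mul_of_nonneg_left h2 (by linarith)
    -- pointwise estimate on spectrum of c
    have hptw2 : cfc (fun t : ℝ => t ^ ((m:ℝ)⁻¹)) c
        ≤ cfc (fun t : ℝ => D * t ^ ((n:ℝ)⁻¹) + δ) c := by
      refine cfc_mono (fun t ht => ?_) hcontm.continuousOn (by fun_prop)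
      have ht0 : 0 ≤ t := spectrum_nonneg_of_nonneg (𝕜 := ℝ) hc0 ht
      have htle : t ≤ 1 + δ := by
        have h1 := spectrum.norm_le_norm_of_mem (𝕜 := ℝ) ht
        have := (le_abs_self t).trans h1
        linarith [hcnorm]
      rcases le_or_gt t (δ ^ m) with hcase | hcase
      · have h1 : t ^ ((m:ℝ)⁻¹) ≤ δ := by
          calc t ^ ((m:ℝ)⁻¹) ≤ (δ^m) ^ ((m:ℝ)⁻¹) := Real.rpow_le_rpow ht0 hcase hminv0
          _ = δ := by
                rw [← Real.rpow_natCast δ m, ← Real.rpow_mul hδ.le,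
                  mul_inv_cancel₀ hmne, Real.rpow_one]
        have h2 : 0 ≤ D * t ^ ((n:ℝ)⁻¹) := mul_nonneg hD0 (Real.rpow_nonneg ht0 _)
        linarith
      · have h1 : t ^ ((m:ℝ)⁻¹) ≤ 1 + δ := by
          calc t ^ ((m:ℝ)⁻¹) ≤ (1+δ) ^ ((m:ℝ)⁻¹) := Real.rpow_le_rpow ht0 htle hminv0
          _ ≤ (1+δ) ^ (1:ℝ) := Real.rpow_le_rpow_of_exponent_le (by linarith) hminv1
          _ = 1 + δ := Real.rpow_one _
        have h3 : (δ^m) ^ ((n:ℝ)⁻¹) ≤ t ^ ((n:ℝ)⁻¹) :=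
          Real.rpow_le_rpow hdm0.le hcase.le hninv0
        have h4 : D * (δ^m) ^ ((n:ℝ)⁻¹) = 1 + δ := by
          rw [hD]; field_simp
        have h5 : D * (δ^m) ^ ((n:ℝ)⁻¹) ≤ D * t ^ ((n:ℝ)⁻¹) :=
          mul_le_mul_of_nonneg_left h3 hD0
        linarith [hδ.le]
    have hsplit2 : cfc (fun t : ℝ => D * t ^ ((n:ℝ)⁻¹) + δ) c
        = D • cfc (fun t : ℝ => t ^ ((n:ℝ)⁻¹)) c + algebraMap ℝ A δ := by
      rw [cfc_add_const δ (fun t : ℝ => D * t ^ ((n:ℝ)⁻¹)) c (by fun_prop)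
        (IsSelfAdjoint.of_nonneg hc0), cfc_const_mul D _ c hcontn.continuousOn]
    have hchain2 : phi τ (cfc (fun t : ℝ => t ^ ((m:ℝ)⁻¹)) c)
        ≤ D * phi τ (cfc (fun t : ℝ => t ^ ((n:ℝ)⁻¹)) c) + δ := by
      have h1 := phi_mono τ hpos (hptw2.trans_eq hsplit2)
      rwa [phi_add_algebraMap τ hone, phi_real_smul] at h1
    have hchain3 : phi τ (cfc (fun t : ℝ => t ^ ((n:ℝ)⁻¹)) c) ≤ K ^ ((n:ℝ)⁻¹) * w n := by
      have hmono2 : cfc (fun t : ℝ => t ^ ((n:ℝ)⁻¹)) c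
          ≤ K ^ ((n:ℝ)⁻¹) • cfc (fun t : ℝ => t ^ ((n:ℝ)⁻¹)) b := by
        have := rpow_dyadic_mono N₀ hnR hc0 hcKb
        rwa [cfc_rpow_smul hK0.le hb n] at this
      have h1 := phi_mono τ hpos hmono2
      rwa [phi_real_smul] at h1
    -- assemble
    have hwn : w n ≤ L := hwL n hn1
    have hwn0 : 0 ≤ w n := hw_nonneg n
    have hphin0 : 0 ≤ phi τ (cfc (fun t : ℝ => t ^ ((n:ℝ)⁻¹)) c) :=
      phi_cfc_rpow_nonneg τ hpos hc0 n
    have hfinal : D * phi τ (cfc (fun t : ℝ => t ^ ((n:ℝ)⁻¹)) c) ≤ (1+δ)^2 * L := by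
      calc D * phi τ (cfc (fun t : ℝ => t ^ ((n:ℝ)⁻¹)) c)
          ≤ D * (K ^ ((n:ℝ)⁻¹) * w n) := mul_le_mul_of_nonneg_left hchain3 hD0
      _ = (D * K ^ ((n:ℝ)⁻¹)) * w n := by ring
      _ ≤ (1+δ)^2 * w n := mul_le_mul_of_nonneg_right hDK hwn0
      _ ≤ (1+δ)^2 * L := mul_le_mul_of_nonneg_left hwn (by positivity)
    have hum : u m = phi τ (cfc (fun t : ℝ => t ^ ((m:ℝ)⁻¹)) a) := rfl
    rw [show u (2^k) = u m from rfl, hum]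
    have := hchain1
    rw [hum] at this
    linarith [hswap ▸ this, hchain2, hfinal]
  -- conclude
  have hbound : ∀ δ : ℝ, 0 < δ → δ ≤ 1 → Filter.limsup u atTop ≤ (1+δ)^2 * L + 2*δ := by
    intro δ hδ hδ1
    refine Filter.limsup_le_of_le hu_cobdd ?_
    filter_upwards [eventually_ge_atTop 1] with j hj
    have hjlt : j < 2 ^ j := Nat.lt_two_pow_self (n := j)
    calc u j ≤ u (2 ^ j) := phi_cfc_rpow_mono_exp τ hpos ha hna hj hjlt.le
    _ ≤ (1+δ)^2 * L + 2*δ := key δ hδ hδ1 j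
  refine le_of_forall_pos_le_add fun ε' hε' => ?_
  have hden : (0:ℝ) < 3 * L + 2 := by linarith
  set δ := min (ε' / (3 * L + 2)) 1 with hδdef
  have hδ0 : 0 < δ := lt_min (by positivity) one_pos
  have hδ1 : δ ≤ 1 := min_le_right _ _
  have h1 := hbound δ hδ0 hδ1
  have h2 : (1+δ)^2 * L + 2*δ ≤ L + δ * (3 * L + 2) := by
    nlinarith [mul_nonneg (mul_nonneg hδ0.le hL0) (sub_nonneg.mpr hδ1)]
  have h3 : δ * (3 * L + 2) ≤ ε' := by
    have := min_le_left (ε' / (3 * L + 2)) 1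
    calc δ * (3 * L + 2) ≤ (ε' / (3 * L + 2)) * (3 * L + 2) :=
      mul_le_mul_of_nonneg_right this hden.le
    _ = ε' := by field_simp
  calc Filter.limsup u atTop ≤ (1+δ)^2 * L + 2*δ := h1
  _ ≤ L + δ * (3 * L + 2) := h2
  _ ≤ L + ε' := by linarith

lemma limsup_smul_le [Nontrivial A] (hpos : ∀ x : A, 0 ≤ x → 0 ≤ τ x) (hone : τ 1 = 1)
    {x : A} (hx : 0 ≤ x) {s : ℝ} (hs : 0 < s) :
    Filter.limsup (fun n : ℕ => phi τ (cfc (fun t : ℝ => t ^ ((n : ℝ)⁻¹)) (s • x))) atTop ≤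
    Filter.limsup (fun n : ℕ => phi τ (cfc (fun t : ℝ => t ^ ((n : ℝ)⁻¹)) x)) atTop := by
  set u : ℕ → ℝ := fun n => phi τ (cfc (fun t : ℝ => t ^ ((n : ℝ)⁻¹)) x) with hu
  set u' : ℕ → ℝ := fun n => phi τ (cfc (fun t : ℝ => t ^ ((n : ℝ)⁻¹)) (s • x)) with hu'
  have hval : ∀ n, u' n = s ^ ((n:ℝ)⁻¹) * u n := fun n => by
    rw [hu', hu]
    simp only
    rw [cfc_rpow_smul hs.le hx n, phi_real_smul]
  set C := max 1 ‖x‖ with hC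
  have hC0 : (0:ℝ) < C := lt_of_lt_of_le one_pos (le_max_left _ _)
  have hub : ∀ n, u n ≤ C := fun n => phi_cfc_rpow_le τ hpos hone hx n
  have hun0 : ∀ n, 0 ≤ u n := fun n => phi_cfc_rpow_nonneg τ hpos hx n
  have hu_bdd : IsBoundedUnder (· ≤ ·) atTop u :=
    ⟨C, Filter.eventually_map.mpr (Filter.Eventually.of_forall hub)⟩
  have hu_cobdd : IsCoboundedUnder (· ≤ ·) atTop u :=
    Filter.isCoboundedUnder_le_of_le atTop hun0
  have hu'_cobdd : IsCoboundedUnder (· ≤ ·) atTop u' := by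
    refine Filter.isCoboundedUnder_le_of_le atTop (x := 0) fun n => ?_
    rw [hval n]
    exact mul_nonneg (Real.rpow_nonneg hs.le _) (hun0 n)
  have htend : Tendsto (fun n : ℕ => s ^ ((n:ℝ)⁻¹)) atTop (nhds 1) := by
    have h1 : Tendsto (fun n : ℕ => ((n:ℝ))⁻¹) atTop (nhds 0) :=
      tendsto_inv_atTop_nhds_zero_nat
    have h2 : Continuous fun y : ℝ => s ^ y := by
      have heq : (fun y : ℝ => s ^ y) = fun y => Real.exp (Real.log s * y) := by
        funext y; rw [Real.rpow_def_of_pos hs]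
      rw [heq]
      exact Real.continuous_exp.comp (continuous_const.mul continuous_id)
    have h3 := (h2.continuousAt (x := 0)).tendsto.comp h1
    simpa [Function.comp_def] using h3
  refine le_of_forall_pos_le_add fun ε hε => ?_
  have hev : ∀ᶠ n in atTop, u' n ≤ u n + ε := by
    obtain ⟨N, hN⟩ := Metric.tendsto_atTop.mp htend (ε / C) (by positivity)
    filter_upwards [eventually_ge_atTop N] with n hn
    have h5 := hN n hn
    rw [Real.dist_eq] at h5
    obtain ⟨h5a, h5b⟩ := abs_lt.mp h5
    have h6 : s ^ ((n:ℝ)⁻¹) ≤ 1 + ε / C := by linarith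
    rw [hval n]
    have h7 : s ^ ((n:ℝ)⁻¹) * u n ≤ (1 + ε/C) * u n :=
      mul_le_mul_of_nonneg_right h6 (hun0 n)
    have h8 : (ε / C) * u n ≤ (ε / C) * C := mul_le_mul_of_nonneg_left (hub n) (by positivity)
    have h9 : (ε / C) * C = ε := by field_simp
    nlinarith [hun0 n]
  have hbdd2 : IsBoundedUnder (· ≤ ·) atTop (fun n => u n + ε) :=
    ⟨C + ε, Filter.eventually_map.mpr (Filter.Eventually.of_forall fun n => by
      have := hub n; linarith)⟩
  calc Filter.limsup u' atTop ≤ Filter.limsup (fun n => u n + ε) atTop :=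
        Filter.limsup_le_limsup hev hu'_cobdd hbdd2
  _ = Filter.limsup u atTop + ε := limsup_add_const atTop u ε hu_bdd hu_cobdd

lemma limsup_smul_eq [Nontrivial A] (hpos : ∀ x : A, 0 ≤ x → 0 ≤ τ x) (hone : τ 1 = 1)
    {x : A} (hx : 0 ≤ x) {s : ℝ} (hs : 0 < s) :
    Filter.limsup (fun n : ℕ => phi τ (cfc (fun t : ℝ => t ^ ((n : ℝ)⁻¹)) (s • x))) atTop =
    Filter.limsup (fun n : ℕ => phi τ (cfc (fun t : ℝ => t ^ ((n : ℝ)⁻¹)) x)) atTop := by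
  refine le_antisymm (limsup_smul_le τ hpos hone hx hs) ?_
  have h1 := limsup_smul_le τ hpos hone (smul_nonneg'' hs.le hx) (s := s⁻¹) (inv_pos.mpr hs)
  rw [smul_smul, inv_mul_cancel₀ hs.ne', one_smul] at h1
  exact h1

end CuntzProof

open Filter Topology
open scoped ComplexOrder

/-- The dimension function associated to a trace: `d_τ(x) = lim_n τ(x^{1/n})`
(realized as a `limsup`, which agrees with the limit whenever it exists). -/
noncomputable def dTau {A : Type*} [CStarAlgebra A] [PartialOrder A] [StarOrderedRing A]
    (τ : A →L[ℂ] ℂ) (x : A) : ℝ :=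
  Filter.limsup (fun n : ℕ => (τ (cfc (fun t : ℝ => t ^ ((n : ℝ)⁻¹)) x)).re) Filter.atTop

/-- If `a ≾ b` for positive elements of a unital C*-algebra and `τ` is a tracial
state, then `d_τ(a) ≤ d_τ(b)`. -/
theorem stmt_11 {A : Type*} [CStarAlgebra A] [PartialOrder A] [StarOrderedRing A]
    (τ : A →L[ℂ] ℂ)
    (hpos : ∀ x : A, 0 ≤ x → 0 ≤ τ x) (hone : τ 1 = 1)
    (htr : ∀ x y : A, τ (x * y) = τ (y * x))
    (a b : A) (ha : 0 ≤ a) (hb : 0 ≤ b) (h : CuntzSubequiv a b) :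
    dTau τ a ≤ dTau τ b := by
  rcases subsingleton_or_nontrivial A with hsub | hnt
  · rw [Subsingleton.elim a b]
  obtain ⟨v, hv⟩ := h
  have hdT : ∀ x : A, dTau τ x =
      Filter.limsup (fun n : ℕ =>
        CuntzProof.phi τ (cfc (fun t : ℝ => t ^ ((n : ℝ)⁻¹)) x)) atTop :=
    fun _ => rfl
  set Ca := max ‖a‖ 1 with hCa
  set Cb := max ‖b‖ 1 with hCb
  have hCa0 : (0:ℝ) < Ca := lt_of_lt_of_le one_pos (le_max_right _ _)
  have hCb0 : (0:ℝ) < Cb := lt_of_lt_of_le one_pos (le_max_right _ _)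
  set a' := Ca⁻¹ • a with ha'def
  set b' := Cb⁻¹ • b with hb'def
  have ha' : 0 ≤ a' := CuntzProof.smul_nonneg'' (by positivity) ha
  have hb' : 0 ≤ b' := CuntzProof.smul_nonneg'' (by positivity) hb
  have hna' : ‖a'‖ ≤ 1 := by
    rw [ha'def, norm_smul, Real.norm_eq_abs, abs_of_pos (by positivity)]
    calc Ca⁻¹ * ‖a‖ ≤ Ca⁻¹ * Ca := mul_le_mul_of_nonneg_left (le_max_left _ _) (by positivity)
    _ = 1 := inv_mul_cancel₀ hCa0.ne'
  have hnb' : ‖b'‖ ≤ 1 := by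
    rw [hb'def, norm_smul, Real.norm_eq_abs, abs_of_pos (by positivity)]
    calc Cb⁻¹ * ‖b‖ ≤ Cb⁻¹ * Cb := mul_le_mul_of_nonneg_left (le_max_left _ _) (by positivity)
    _ = 1 := inv_mul_cancel₀ hCb0.ne'
  set r := Real.sqrt (Ca⁻¹ * Cb) with hr
  have hrr : r * r = Ca⁻¹ * Cb := Real.mul_self_sqrt (by positivity)
  set v' : ℕ → A := fun n => r • v n with hv'def
  have hfun : ∀ n, v' n * b' * star (v' n) = Ca⁻¹ • (v n * b * star (v n)) := by
    intro n
    rw [hv'def, hb'def]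
    simp only
    rw [star_smul, star_trivial, smul_mul_smul_comm, smul_mul_smul_comm]
    congr 1
    rw [show r * Cb⁻¹ * r = (r * r) * Cb⁻¹ by ring, hrr]
    field_simp
  have hv' : Tendsto (fun n => v' n * b' * star (v' n)) atTop (nhds a') := by
    rw [ha'def]
    have h1 := hv.const_smul Ca⁻¹
    exact h1.congr fun n => (hfun n).symm
  have hmain := CuntzProof.main_norm τ hpos hone htr ha' hb' hna' hnb' v' hv'
  have hA := CuntzProof.limsup_smul_eq τ hpos hone ha (s := Ca⁻¹) (by positivity)
  have hB := CuntzProof.limsup_smul_eq τ hpos hone hb (s := Cb⁻¹) (by positivity)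
  rw [hdT a, hdT b, ← hA, ← hB]
  exact hmain
end

section
/- On a metrizable compact convex set K, every bounded strictly positive lower semicontinuous affine function is the pointwise supremum of an increasing sequence of continuous strictly positive affine functions on K. -/
open Set Filter Topology

set_option linter.unusedSectionVars false
set_option maxHeartbeats 1000000


variable {E : Type*} [AddCommGroup E] [Module ℝ E] [TopologicalSpace E]
  [IsTopologicalAddGroup E] [ContinuousSMul ℝ E]

/-- `f` is affine on `K`. -/
def IsAffineOn (K : Set E) (f : E → ℝ) : Prop :=
  ∀ x ∈ K, ∀ y ∈ K, ∀ t : ℝ, 0 ≤ t → t ≤ 1 →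
    f (t • x + (1 - t) • y) = t * f x + (1 - t) * f y

private lemma affine_combo {K : Set E} {f : E → ℝ} (haff : IsAffineOn K f) :
    ∀ x ∈ K, ∀ y ∈ K, ∀ a b : ℝ, 0 ≤ a → 0 ≤ b → a + b = 1 →
      f (a • x + b • y) = a * f x + b * f y := by
  intro x hx y hy a b ha hb hab
  have hb' : b = 1 - a := by linarith
  subst hb'
  exact haff x hx y hy a ha (by linarith)

private lemma sep_main [LocallyConvexSpace ℝ E] {K : Set E} (hK : IsCompact K)
    (hconv : Convex ℝ K) [TopologicalSpace.MetrizableSpace K]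
    {f : E → ℝ} (haff : IsAffineOn K f) (hlsc : LowerSemicontinuousOn f K)
    {M : ℝ} (hM : ∀ x ∈ K, f x ≤ M) (h0 : ∀ x ∈ K, 0 ≤ f x)
    {C : Set (E × ℝ)} (hCc : IsCompact C) (hCconv : Convex ℝ C) (hCne : C.Nonempty)
    (hCsub : ∀ p ∈ C, p.1 ∈ K ∧ p.2 < f p.1) :
    ∃ (ℓ : E →L[ℝ] ℝ) (c : ℝ), (∀ x ∈ K, ℓ x + c < f x) ∧ ∀ p ∈ C, p.2 < ℓ p.1 + c := by
  haveI : CompactSpace K := isCompact_iff_compactSpace.mp hK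
  letI : MetricSpace K := TopologicalSpace.metrizableSpaceMetric K
  set Epi : Set (E × ℝ) := {p | p.1 ∈ K ∧ f p.1 ≤ p.2 ∧ p.2 ≤ M} with hEpidef
  -- closedness of epigraph over the subtype
  have hA : IsClosed {q : K × ℝ | f ↑q.1 ≤ q.2} := by
    rw [← isOpen_compl_iff, isOpen_iff_mem_nhds]
    rintro ⟨x, t⟩ ht
    simp only [mem_compl_iff, mem_setOf_eq, not_le] at ht
    obtain ⟨r, hr1, hr2⟩ := exists_between ht
    have hev : {y : E | r < f y} ∈ 𝓝[K] (x : E) := hlsc x x.2 r hr2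
    rw [← map_nhds_subtype_val] at hev
    have hU : {y : K | r < f ↑y} ∈ 𝓝 x := hev
    rw [nhds_prod_eq]
    refine mem_of_superset (prod_mem_prod hU (Iio_mem_nhds hr1)) ?_
    rintro ⟨y, s⟩ ⟨hy, hs⟩
    simp only [mem_compl_iff, mem_setOf_eq, not_le]
    exact lt_trans hs hy
  have hE'c : IsCompact {q : K × ℝ | f ↑q.1 ≤ q.2 ∧ q.2 ≤ M} := by
    refine IsCompact.of_isClosed_subset (isCompact_univ.prod (isCompact_Icc (a := (0:ℝ)) (b := M)))
      (hA.inter (isClosed_le continuous_snd continuous_const)) ?_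
    rintro ⟨y, s⟩ ⟨h1, h2⟩
    exact ⟨trivial, le_trans (h0 _ y.2) h1, h2⟩
  have hEpiimg : Epi = (fun q : K × ℝ => ((q.1 : E), q.2)) '' {q : K × ℝ | f ↑q.1 ≤ q.2 ∧ q.2 ≤ M} := by
    ext ⟨x, t⟩
    constructor
    · rintro ⟨hx, hf, hM'⟩
      exact ⟨⟨⟨x, hx⟩, t⟩, ⟨hf, hM'⟩, rfl⟩
    · rintro ⟨⟨y, s⟩, ⟨hf, hM'⟩, heq⟩
      obtain ⟨h1, h2⟩ := Prod.mk.injEq .. ▸ heq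
      exact ⟨h1 ▸ y.2, by simp_all, by simp_all⟩
  have hEpiCompact : IsCompact Epi := by
    rw [hEpiimg]
    exact hE'c.image ((continuous_subtype_val.comp continuous_fst).prodMk continuous_snd)
  have hEpiConv : Convex ℝ Epi := by
    rintro ⟨x, s⟩ ⟨hx, hfx, hsM⟩ ⟨y, t⟩ ⟨hy, hfy, htM⟩ a b ha hb hab
    refine ⟨hconv hx hy ha hb hab, ?_, ?_⟩
    · show f (a • x + b • y) ≤ a * s + b * t
      rw [affine_combo haff x hx y hy a b ha hb hab]
      exact add_le_add (mul_le_mul_of_nonneg_left hfx ha) (mul_le_mul_of_nonneg_left hfy hb)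
    · show a * s + b * t ≤ M
      calc a * s + b * t ≤ a * M + b * M :=
            add_le_add (mul_le_mul_of_nonneg_left hsM ha) (mul_le_mul_of_nonneg_left htM hb)
        _ = M := by rw [← add_mul, hab, one_mul]
  -- disjointness from the closure
  have hdis : Disjoint C (closure Epi) := by
    rw [Set.disjoint_left]
    intro p hpC hpcl
    obtain ⟨hp1, hp2⟩ := hCsub p hpC
    obtain ⟨q, hqE, hq⟩ := hEpiCompact.mem_closure_iff_exists_inseparable.mp hpcl
    have hq' : Inseparable (q.1, q.2) (p.1, p.2) := hq
    obtain ⟨h1, h2⟩ := inseparable_prod.mp hq'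
    have h2' : q.2 = p.2 := h2.eq
    have h1' : q.1 = p.1 := by
      have : Inseparable (⟨q.1, hqE.1⟩ : K) (⟨p.1, hp1⟩ : K) := (subtype_inseparable_iff _ _).mpr h1
      exact congrArg Subtype.val this.eq
    have := hqE.2.1
    rw [h1', h2'] at this
    exact absurd hp2 (not_lt.mpr this)
  obtain ⟨Λ, u, v, hu, huv, hv⟩ :=
    geometric_hahn_banach_compact_closed hCconv hCc hEpiConv.closure isClosed_closure hdis
  set β := Λ ((0 : E), (1 : ℝ)) with hβdef
  have hΛ : ∀ p : E × ℝ, Λ p = Λ (p.1, 0) + p.2 * β := by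
    intro p
    have hp : p = (p.1, (0 : ℝ)) + p.2 • ((0 : E), (1 : ℝ)) := by
      simp [Prod.ext_iff]
    calc Λ p = Λ ((p.1, (0:ℝ)) + p.2 • ((0:E), (1:ℝ))) := by rw [← hp]
      _ = Λ (p.1, 0) + p.2 * β := by rw [map_add, map_smul, smul_eq_mul]
  obtain ⟨p0, hp0⟩ := hCne
  obtain ⟨hp0K, hp0f⟩ := hCsub p0 hp0
  have q1 : Λ (p0.1, 0) + p0.2 * β < u := hΛ p0 ▸ hu p0 hp0
  have q2 : v < Λ (p0.1, 0) + f p0.1 * β := by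
    have := hv (p0.1, f p0.1) (subset_closure ⟨hp0K, le_refl _, hM _ hp0K⟩)
    rwa [hΛ (p0.1, f p0.1)] at this
  have hβ : 0 < β := by
    by_contra hle
    push_neg at hle
    have : f p0.1 * β ≤ p0.2 * β := mul_le_mul_of_nonpos_right hp0f.le hle
    linarith
  have hβi : 0 < β⁻¹ := inv_pos.mpr hβ
  refine ⟨(-β⁻¹) • Λ.comp ((ContinuousLinearMap.id ℝ E).prod 0), v * β⁻¹, ?_, ?_⟩
  · intro x hx
    have hvx : v < Λ (x, 0) + f x * β := by
      have := hv (x, f x) (subset_closure ⟨hx, le_refl _, hM x hx⟩)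
      rwa [hΛ (x, f x)] at this
    have h2 : v * β⁻¹ < (Λ (x, 0) + f x * β) * β⁻¹ := mul_lt_mul_of_pos_right hvx hβi
    have h3 : (Λ (x, 0) + f x * β) * β⁻¹ = Λ (x, 0) * β⁻¹ + f x := by field_simp
    simp only [ContinuousLinearMap.smul_apply, ContinuousLinearMap.comp_apply,
      ContinuousLinearMap.prod_apply, ContinuousLinearMap.id_apply,
      ContinuousLinearMap.zero_apply, smul_eq_mul]
    nlinarith
  · intro p hp
    have hpu : Λ (p.1, 0) + p.2 * β < u := hΛ p ▸ hu p hp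
    have h2 : (Λ (p.1, 0) + p.2 * β) * β⁻¹ < v * β⁻¹ :=
      mul_lt_mul_of_pos_right (lt_trans hpu huv) hβi
    have h3 : (Λ (p.1, 0) + p.2 * β) * β⁻¹ = Λ (p.1, 0) * β⁻¹ + p.2 := by field_simp
    simp only [ContinuousLinearMap.smul_apply, ContinuousLinearMap.comp_apply,
      ContinuousLinearMap.prod_apply, ContinuousLinearMap.id_apply,
      ContinuousLinearMap.zero_apply, smul_eq_mul]
    nlinarith

private lemma isAffineOn_clm' (K : Set E) (ℓ : E →L[ℝ] ℝ) (c : ℝ) :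
    ∀ x ∈ K, ∀ y ∈ K, ∀ t : ℝ, 0 ≤ t → t ≤ 1 →
      (fun x => ℓ x + c) (t • x + (1 - t) • y) =
        t * (fun x => ℓ x + c) x + (1 - t) * (fun x => ℓ x + c) y := by
  intro x hx y hy t ht0 ht1
  simp only [map_add, map_smul, smul_eq_mul]
  ring

private lemma graph_convex' {K : Set E} (hconv : Convex ℝ K) (ℓ : E →L[ℝ] ℝ) (c : ℝ) :
    Convex ℝ ((fun x => (x, ℓ x + c)) '' K : Set (E × ℝ)) := by
  rintro _ ⟨x, hx, rfl⟩ _ ⟨y, hy, rfl⟩ a b ha hb hab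
  refine ⟨a • x + b • y, hconv hx hy ha hb hab, ?_⟩
  simp only [Prod.ext_iff, Prod.smul_fst, Prod.smul_snd, Prod.fst_add, Prod.snd_add,
    smul_eq_mul, map_add, map_smul]
  refine ⟨trivial, ?_⟩
  have h1 : a * c + b * c = c := by rw [← add_mul, hab, one_mul]
  linarith

private lemma isCompact_convexJoin' {F : Type*} [AddCommGroup F] [Module ℝ F]
    [TopologicalSpace F] [IsTopologicalAddGroup F] [ContinuousSMul ℝ F]
    {A B : Set F} (hA : IsCompact A) (hB : IsCompact B) :
    IsCompact (convexJoin ℝ A B) := by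
  have himg : convexJoin ℝ A B =
      (fun q : ℝ × F × F => (1 - q.1) • q.2.1 + q.1 • q.2.2) '' (Icc (0:ℝ) 1 ×ˢ A ×ˢ B) := by
    ext p
    constructor
    · intro hp
      obtain ⟨a, ha, b, hb, hseg⟩ := mem_convexJoin.mp hp
      rw [segment_eq_image] at hseg
      obtain ⟨θ, hθ, hθeq⟩ := hseg
      exact ⟨(θ, a, b), ⟨hθ, ha, hb⟩, hθeq⟩
    · rintro ⟨⟨θ, a, b⟩, ⟨hθ, ha, hb⟩, rfl⟩
      refine mem_convexJoin.mpr ⟨a, ha, b, hb, ?_⟩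
      rw [segment_eq_image]
      exact ⟨θ, hθ, rfl⟩
  rw [himg]
  refine (isCompact_Icc.prod (hA.prod hB)).image ?_
  exact ((continuous_const.sub continuous_fst).smul
      (continuous_fst.comp continuous_snd)).add
    (continuous_fst.smul (continuous_snd.comp continuous_snd))


/-- On a metrizable compact convex set `K`, every bounded strictly positive
lower semicontinuous affine function is the pointwise supremum of an increasing
sequence of continuous strictly positive affine functions. -/
theorem stmt_16 [LocallyConvexSpace ℝ E] (K : Set E) (hK : IsCompact K)
    (hconv : Convex ℝ K) [TopologicalSpace.MetrizableSpace K]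
    (f : E → ℝ) (haff : IsAffineOn K f) (hlsc : LowerSemicontinuousOn f K)
    (hpos : ∀ x ∈ K, 0 < f x) (hbdd : BddAbove (f '' K)) :
    ∃ u : ℕ → E → ℝ,
      (∀ n, IsAffineOn K (u n) ∧ ContinuousOn (u n) K ∧ ∀ x ∈ K, 0 < u n x) ∧
      (∀ n, ∀ x ∈ K, u n x ≤ u (n + 1) x) ∧
      (∀ x ∈ K, IsLUB (Set.range fun n => u n x) (f x)) := by
  classical
  rcases K.eq_empty_or_nonempty with rfl | ⟨x0, hx0⟩
  · exact ⟨fun _ _ => 1,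
      fun n => ⟨fun x hx => absurd hx (Set.notMem_empty x), continuousOn_empty _,
        fun x hx => absurd hx (Set.notMem_empty x)⟩,
      fun n x hx => absurd hx (Set.notMem_empty x),
      fun x hx => absurd hx (Set.notMem_empty x)⟩
  obtain ⟨M, hMub⟩ := hbdd
  have hM : ∀ x ∈ K, f x ≤ M := fun x hx => hMub ⟨x, hx, rfl⟩
  have h0 : ∀ x ∈ K, 0 ≤ f x := fun x hx => (hpos x hx).le
  -- uniform positive lower bound
  obtain ⟨δ, hδ0, hδ⟩ : ∃ δ : ℝ, 0 < δ ∧ ∀ x ∈ K, δ ≤ f x := by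
    have h1 : ∀ x ∈ K, ∃ U : Set E, IsOpen U ∧ x ∈ U ∧ ∀ y ∈ U, y ∈ K → f x / 2 < f y := by
      intro x hx
      have hev := hlsc x hx (f x / 2) (half_lt_self (hpos x hx))
      rw [eventually_nhdsWithin_iff] at hev
      obtain ⟨U, hU1, hU2, hU3⟩ := eventually_nhds_iff.mp hev
      exact ⟨U, hU2, hU3, hU1⟩
    choose U hUo hxU hUf using h1
    obtain ⟨t, ht⟩ := hK.elim_nhds_subcover' (fun x hx => U x hx)
      (fun x hx => (hUo x hx).mem_nhds (hxU x hx))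
    have htne : t.Nonempty := by
      by_contra hte
      rw [Finset.not_nonempty_iff_eq_empty] at hte
      subst hte
      simpa using ht hx0
    refine ⟨t.inf' htne (fun x => f ↑x / 2), ?_, ?_⟩
    · rw [Finset.lt_inf'_iff]
      intro b _
      exact half_pos (hpos _ b.2)
    · intro y hy
      have := ht hy
      simp only [Set.mem_iUnion] at this
      obtain ⟨x, hxt, hyU⟩ := this
      exact (Finset.inf'_le _ hxt).trans (hUf ↑x x.2 y hyU hy).le
  set P : (E → ℝ) → Prop := fun h =>
    (∃ ℓ : E →L[ℝ] ℝ, ∃ c : ℝ, h = fun x => ℓ x + c) ∧ ∀ x ∈ K, h x < f x with hP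
  have Ph0 : P (fun _ => δ / 2) := by
    constructor
    · exact ⟨0, δ / 2, by funext x; simp⟩
    · intro x hx
      have := hδ x hx
      linarith
  -- step 1: pointwise approximation by strict minorants
  have sep1 : ∀ x ∈ K, ∀ r : ℝ, r < f x → ∃ h, P h ∧ r < h x := by
    intro x hx r hr
    obtain ⟨ℓ, c, h1, h2⟩ := sep_main hK hconv haff hlsc hM h0 (C := {(x, r)})
      isCompact_singleton (convex_singleton _) ⟨_, rfl⟩
      (by
        rintro p hp
        rw [Set.mem_singleton_iff] at hp
        subst hp
        exact ⟨hx, hr⟩)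
    exact ⟨fun y => ℓ y + c, ⟨⟨ℓ, c, rfl⟩, h1⟩, h2 (x, r) rfl⟩
  -- step 2: the family of strict minorants is directed upward
  have sep2 : ∀ g1 g2 : E → ℝ, P g1 → P g2 →
      ∃ h, P h ∧ ∀ x ∈ K, g1 x ≤ h x ∧ g2 x ≤ h x := by
    rintro g1 g2 ⟨⟨ℓ1, c1, rfl⟩, hg1⟩ ⟨⟨ℓ2, c2, rfl⟩, hg2⟩
    set A1 : Set (E × ℝ) := (fun x => (x, ℓ1 x + c1)) '' K with hA1
    set A2 : Set (E × ℝ) := (fun x => (x, ℓ2 x + c2)) '' K with hA2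
    have hA1c : IsCompact A1 :=
      hK.image (continuous_id.prodMk (ℓ1.continuous.add continuous_const))
    have hA2c : IsCompact A2 :=
      hK.image (continuous_id.prodMk (ℓ2.continuous.add continuous_const))
    have hA1ne : A1.Nonempty := ⟨_, Set.mem_image_of_mem _ hx0⟩
    have hA2ne : A2.Nonempty := ⟨_, Set.mem_image_of_mem _ hx0⟩
    have hCc : IsCompact (convexJoin ℝ A1 A2) := isCompact_convexJoin' hA1c hA2c
    have hCconv : Convex ℝ (convexJoin ℝ A1 A2) :=
      (graph_convex' hconv ℓ1 c1).convexJoin (graph_convex' hconv ℓ2 c2)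
    have hCne : (convexJoin ℝ A1 A2).Nonempty :=
      hA1ne.mono (subset_convexJoin_left hA2ne)
    have hCsub : ∀ p ∈ convexJoin ℝ A1 A2, p.1 ∈ K ∧ p.2 < f p.1 := by
      intro p hp
      obtain ⟨a, ha, b, hb, hseg⟩ := mem_convexJoin.mp hp
      rw [segment_eq_image] at hseg
      obtain ⟨θ, hθ, hθeq⟩ := hseg
      obtain ⟨x, hx, rfl⟩ := ha
      obtain ⟨y, hy, rfl⟩ := hb
      obtain ⟨hθ0, hθ1⟩ := hθ
      subst hθeq
      have hmem : (1 - θ) • x + θ • y ∈ K := hconv hx hy (by linarith) hθ0 (by ring)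
      have hfeq : f ((1 - θ) • x + θ • y) = (1 - θ) * f x + θ * f y :=
        affine_combo haff x hx y hy (1 - θ) θ (by linarith) hθ0 (by ring)
      have hfst : ((1 - θ) • ((x : E), ℓ1 x + c1) + θ • ((y : E), ℓ2 y + c2)).1
          = (1 - θ) • x + θ • y := rfl
      have hsnd : ((1 - θ) • ((x : E), ℓ1 x + c1) + θ • ((y : E), ℓ2 y + c2)).2
          = (1 - θ) * (ℓ1 x + c1) + θ * (ℓ2 y + c2) := rfl
      refine ⟨by rw [hfst]; exact hmem, ?_⟩
      rw [hfst, hsnd, hfeq]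
      have e1 : ℓ1 x + c1 < f x := hg1 x hx
      have e2 : ℓ2 y + c2 < f y := hg2 y hy
      rcases eq_or_lt_of_le hθ1 with rfl | hθ1'
      · simp only [sub_self, zero_mul, one_mul, zero_add]
        linarith
      · have t1 : (1 - θ) * (ℓ1 x + c1) < (1 - θ) * f x :=
          mul_lt_mul_of_pos_left e1 (by linarith)
        have t2 : θ * (ℓ2 y + c2) ≤ θ * f y := mul_le_mul_of_nonneg_left e2.le hθ0
        linarith
    obtain ⟨ℓ, c, h1, h2⟩ := sep_main hK hconv haff hlsc hM h0 hCc hCconv hCne hCsub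
    refine ⟨fun y => ℓ y + c, ⟨⟨ℓ, c, rfl⟩, h1⟩, ?_⟩
    intro x hx
    constructor
    · exact (h2 ((x : E), ℓ1 x + c1)
        (subset_convexJoin_left hA2ne (Set.mem_image_of_mem _ hx))).le
    · exact (h2 ((x : E), ℓ2 x + c2)
        (subset_convexJoin_right hA1ne (Set.mem_image_of_mem _ hx))).le
  -- countable reduction
  haveI : CompactSpace K := isCompact_iff_compactSpace.mp hK
  letI : MetricSpace K := TopologicalSpace.metrizableSpaceMetric K
  haveI : SecondCountableTopology (↥K × ℝ) := inferInstance
  set V : {h : E → ℝ // P h} → Set (↥K × ℝ) := fun h => {q | q.2 < h.1 ↑q.1} with hV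
  have hVopen : ∀ h, IsOpen (V h) := by
    intro h
    obtain ⟨⟨ℓ, c, hlc⟩, -⟩ := h.2
    have hcont : Continuous h.1 := by rw [hlc]; exact ℓ.continuous.add continuous_const
    exact isOpen_lt continuous_snd (hcont.comp (continuous_subtype_val.comp continuous_fst))
  obtain ⟨T, hTc, hTeq⟩ := TopologicalSpace.isOpen_iUnion_countable V hVopen
  set h₀ : {h : E → ℝ // P h} := ⟨fun _ => δ / 2, Ph0⟩ with hh₀
  obtain ⟨e, he⟩ := (hTc.insert h₀).exists_eq_range ⟨h₀, Set.mem_insert _ _⟩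
  have hkey : ∀ x ∈ K, ∀ r : ℝ, r < f x → ∃ n, r < (e n).1 x := by
    intro x hx r hr
    obtain ⟨h, Ph, hrh⟩ := sep1 x hx r hr
    have hmem : ((⟨x, hx⟩ : K), r) ∈ ⋃ i, V i := Set.mem_iUnion.mpr ⟨⟨h, Ph⟩, hrh⟩
    rw [← hTeq] at hmem
    obtain ⟨i, hiT, hi⟩ := Set.mem_iUnion₂.mp hmem
    have : i ∈ insert h₀ T := Set.mem_insert_of_mem _ hiT
    rw [he] at this
    obtain ⟨n, rfl⟩ := this
    exact ⟨n, hi⟩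
  -- recursive construction
  have sep2' : ∀ p q : {h : E → ℝ // P h}, ∃ r : {h : E → ℝ // P h},
      ∀ x ∈ K, p.1 x ≤ r.1 x ∧ q.1 x ≤ r.1 x := by
    intro p q
    obtain ⟨h, Ph, hh⟩ := sep2 p.1 q.1 p.2 q.2
    exact ⟨⟨h, Ph⟩, hh⟩
  choose g hg using sep2'
  set w : ℕ → {h : E → ℝ // P h} := fun n => Nat.rec h₀ (fun n p => g p (e n)) n with hwdef
  have hw0 : w 0 = h₀ := rfl
  have hwsucc : ∀ n, w (n + 1) = g (w n) (e n) := fun n => rfl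
  have hmono : ∀ n, ∀ x ∈ K, (w n).1 x ≤ (w (n + 1)).1 x := by
    intro n x hx
    rw [hwsucc n]
    exact (hg (w n) (e n) x hx).1
  have hlow : ∀ n, ∀ x ∈ K, δ / 2 ≤ (w n).1 x := by
    intro n
    induction n with
    | zero => intro x hx; exact le_of_eq rfl
    | succ n ih => intro x hx; exact (ih x hx).trans (hmono n x hx)
  refine ⟨fun n => (w n).1, ?_, hmono, ?_⟩
  · intro n
    obtain ⟨⟨ℓ, c, hlc⟩, hlt⟩ := (w n).2
    refine ⟨?_, ?_, ?_⟩
    · show IsAffineOn K (w n).1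
      rw [hlc]; exact isAffineOn_clm' K ℓ c
    · show ContinuousOn (w n).1 K
      rw [hlc]; exact (ℓ.continuous.add continuous_const).continuousOn
    · intro x hx
      exact lt_of_lt_of_le (half_pos hδ0) (hlow n x hx)
  · intro x hx
    constructor
    · rintro y ⟨n, rfl⟩
      exact ((w n).2.2 x hx).le
    · intro b hb
      by_contra hbf
      push_neg at hbf
      obtain ⟨n, hn⟩ := hkey x hx b hbf
      have h1 : (e n).1 x ≤ (w (n + 1)).1 x := by
        rw [hwsucc n]
        exact (hg (w n) (e n) x hx).2
      have h2 : (w (n + 1)).1 x ≤ b := hb ⟨n + 1, rfl⟩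
      linarith
end
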